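/- arXiv:1612.02024 — 6 statements merged into one kernel-verified Lean document; each statement's English description precedes it below -/
import Mathlib

section
/- Suppose 𝒫₁ is indistinguishable from 𝒫₀ in the weak distance: for every Q ∈ 𝒫₁ there exists a sequence {P_k} in 𝒫₀ with P_k →d Q. Then every test φ that is a.s. continuous under every Q ∈ 𝒫₁ has power limited by size: sup_{Q∈𝒫₁} E_Q[φ] ≤ sup_{P∈𝒫₀} E_P[φ]. -/
open MeasureTheory Filter

/-- The distribution of an i.i.d. sample of size `n` from `P`: the `n`-fold product measure. -/
noncomputable def sampleDist (n : ℕ) {E : Type*} [MeasurableSpace E]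
    (P : ProbabilityMeasure E) : Measure (Fin n → E) :=
  Measure.pi fun _ => (P : Measure E)

/-- `E_P[φ]`, the rejection probability of the test `φ` under `P^{⊗n}`. -/
noncomputable def tpower (n : ℕ) {E : Type*} [MeasurableSpace E]
    (P : ProbabilityMeasure E) (φ : (Fin n → E) → ℝ) : ℝ :=
  ∫ z, φ z ∂ sampleDist n P

/-- A test is a measurable function with values in `[0,1]`. -/
def IsTest {E : Type*} [MeasurableSpace E] (φ : E → ℝ) : Prop :=
  Measurable φ ∧ ∀ z, φ z ∈ Set.Icc (0:ℝ) 1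

/-- `φ` is almost-surely continuous under `Q` (i.e. under `Q^{⊗n}`). -/
def ASCont {E : Type*} [MeasurableSpace E] [TopologicalSpace E] (n : ℕ)
    (Q : ProbabilityMeasure E) (φ : (Fin n → E) → ℝ) : Prop :=
  sampleDist n Q {z | ¬ ContinuousAt φ z} = 0

/-- Convergence in distribution: integrals of every bounded continuous function converge. -/
def ConvDM {E : Type*} [MeasurableSpace E] [TopologicalSpace E]
    (P : ℕ → Measure E) (Q : Measure E) : Prop :=
  ∀ g : E → ℝ, Continuous g → (∃ C, ∀ x, |g x| ≤ C) →
    Tendsto (fun k => ∫ x, g x ∂ P k) atTop (nhds (∫ x, g x ∂ Q))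

instance sampleDist.instIsProbabilityMeasure (n : ℕ) {E : Type*} [MeasurableSpace E]
    (P : ProbabilityMeasure E) : IsProbabilityMeasure (sampleDist n P) := by
  unfold sampleDist; infer_instance

section Aux

lemma aux_tendsto_finset_prod_ennreal {ι α : Type*} (s : Finset ι) (f : α → ι → ENNReal)
    (g : ι → ENNReal) (F : Filter α) (hg : ∀ i, g i ≠ ⊤)
    (h : ∀ i, Tendsto (fun k => f k i) F (nhds (g i))) :
    Tendsto (fun k => ∏ i ∈ s, f k i) F (nhds (∏ i ∈ s, g i)) := by
  classical
  induction s using Finset.induction_on with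
  | empty => simpa using tendsto_const_nhds
  | insert a s ha ih =>
    simp only [Finset.prod_insert ha]
    exact ENNReal.Tendsto.mul (h a) (Or.inr (ENNReal.prod_ne_top fun i _ => hg i)) ih
      (Or.inr (hg a))

variable {l n : ℕ} (P : ℕ → ProbabilityMeasure (Fin l → ℝ)) (Q : ProbabilityMeasure (Fin l → ℝ))

lemma aux_tendsto_box (hPQ : Tendsto P atTop (nhds Q)) (B : Fin n → Set (Fin l → ℝ)) (hBm : ∀ j, MeasurableSet (B j))
    (hBf : ∀ j, (Q : Measure (Fin l → ℝ)) (frontier (B j)) = 0) :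
    Tendsto (fun k => sampleDist n (P k) (Set.univ.pi B)) atTop
      (nhds (sampleDist n Q (Set.univ.pi B))) := by
  simp only [sampleDist, Measure.pi_pi]
  exact aux_tendsto_finset_prod_ennreal Finset.univ
    (fun k j => (P k : Measure (Fin l → ℝ)) (B j)) (fun j => (Q : Measure (Fin l → ℝ)) (B j))
    atTop (fun j => measure_ne_top _ _)
    (fun j => ProbabilityMeasure.tendsto_measure_of_null_frontier_of_tendsto' hPQ (hBf j))

lemma aux_tendsto_union_boxes (hPQ : Tendsto P atTop (nhds Q)) (m : ℕ) (B : ℕ → Fin n → Set (Fin l → ℝ))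
    (hBo : ∀ i j, IsOpen (B i j))
    (hBf : ∀ i j, (Q : Measure (Fin l → ℝ)) (frontier (B i j)) = 0) :
    Tendsto (fun k => sampleDist n (P k) (⋃ i ∈ Finset.range m, Set.univ.pi (B i))) atTop
      (nhds (sampleDist n Q (⋃ i ∈ Finset.range m, Set.univ.pi (B i)))) := by
  induction m generalizing B with
  | zero => simp only [Finset.range_zero]; simpa using tendsto_const_nhds
  | succ m ih =>
    have hbm : ∀ i j, MeasurableSet (B i j) := fun i j => (hBo i j).measurableSet
    set A := Set.univ.pi (B m) with hA
    set V := ⋃ i ∈ Finset.range m, Set.univ.pi (B i) with hV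
    have hAV : (⋃ i ∈ Finset.range (m+1), Set.univ.pi (B i)) = A ∪ V := by
      rw [Finset.range_add_one, Finset.set_biUnion_insert]
    rw [hAV]
    have measV : MeasurableSet V :=
      MeasurableSet.biUnion (Finset.range m).countable_toSet
        (fun i _ => MeasurableSet.pi Set.countable_univ fun j _ => hbm i j)
    have tA : Tendsto (fun k => sampleDist n (P k) A) atTop (nhds (sampleDist n Q A)) :=
      aux_tendsto_box P Q hPQ (B m) (fun j => hbm m j) (fun j => hBf m j)
    have tV : Tendsto (fun k => sampleDist n (P k) V) atTop (nhds (sampleDist n Q V)) :=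
      ih B hBo hBf
    have hAVi : A ∩ V = ⋃ i ∈ Finset.range m, Set.univ.pi (fun j => B m j ∩ B i j) := by
      rw [hA, hV, Set.inter_iUnion₂]
      exact Set.iUnion₂_congr fun i _ => (Set.pi_inter_distrib).symm
    have tI : Tendsto (fun k => sampleDist n (P k) (A ∩ V)) atTop
        (nhds (sampleDist n Q (A ∩ V))) := by
      rw [hAVi]
      have : (fun k => sampleDist n (P k) (⋃ i ∈ Finset.range m,
          Set.univ.pi (fun j => B m j ∩ B i j))) = fun k => sampleDist n (P k) (⋃ i ∈ Finset.range m,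
          Set.univ.pi (fun j => B m j ∩ B i j)) := rfl
      exact ih (fun i j => B m j ∩ B i j) (fun i j => (hBo m j).inter (hBo i j))
        (fun i j => by
          apply measure_mono_null (t := frontier (B m j) ∪ frontier (B i j))
          · intro x hx
            rcases frontier_inter_subset (B m j) (B i j) hx with h | h
            · exact Or.inl h.1
            · exact Or.inr h.2
          · exact measure_union_null (hBf m j) (hBf i j))
    have hkey : ∀ (ν : Measure (Fin n → Fin l → ℝ)) [IsFiniteMeasure ν],
        ν (A ∪ V) = ν A + ν V - ν (A ∩ V) := fun ν _ =>
      ENNReal.eq_sub_of_add_eq (measure_ne_top ν _) (measure_union_add_inter A measV)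
    have e1 : (fun k => sampleDist n (P k) (A ∪ V)) =
        fun k => sampleDist n (P k) A + sampleDist n (P k) V - sampleDist n (P k) (A ∩ V) :=
      funext fun k => hkey _
    rw [e1, hkey (sampleDist n Q)]
    exact ENNReal.Tendsto.sub (tA.add tV) tI (Or.inr (measure_ne_top _ _))

lemma aux_le_liminf_open (hPQ : Tendsto P atTop (nhds Q)) (U : Set (Fin n → Fin l → ℝ)) (hU : IsOpen U) :
    sampleDist n Q U ≤ atTop.liminf fun k => sampleDist n (P k) U := by
  by_cases hUe : U = ∅
  · simp [hUe]
  have hbox : ∀ x ∈ U, ∃ r : ℝ, 0 < r ∧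
      Set.univ.pi (fun j => Metric.ball (x j) r) ⊆ U ∧
      ∀ j, (Q : Measure (Fin l → ℝ)) (frontier (Metric.ball (x j) r)) = 0 := by
    intro x hx
    obtain ⟨ε, εpos, hball⟩ := Metric.isOpen_iff.1 hU x hx
    have hcnt : ∀ j : Fin n, {r : ℝ |
        0 < (Q : Measure (Fin l → ℝ)) (frontier (Metric.thickening r {x j}))}.Countable :=
      fun j => Measure.countable_meas_pos_of_disjoint_iUnion
        (fun r => isClosed_frontier.measurableSet) (Metric.frontier_thickening_disjoint {x j})
    have hbad : (⋃ j, {r : ℝ |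
        0 < (Q : Measure (Fin l → ℝ)) (frontier (Metric.thickening r {x j}))}).Countable :=
      Set.countable_iUnion hcnt
    have hvol := measure_diff_null (μ := (volume : Measure ℝ)) (s := Set.Ioo 0 ε)
      (hbad.measure_zero volume)
    have hpos : (0:ENNReal) < volume (Set.Ioo (0:ℝ) ε) := by
      simp [Real.volume_Ioo, εpos]
    rw [← hvol] at hpos
    obtain ⟨r, hrI, hrB⟩ := nonempty_of_measure_ne_zero hpos.ne'
    refine ⟨r, hrI.1, ?_, ?_⟩
    · rw [show Set.univ.pi (fun j => Metric.ball (x j) r) = Metric.ball x r from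
        (ball_pi x hrI.1).symm]
      exact (Metric.ball_subset_ball hrI.2.le).trans hball
    · intro j
      rw [show Metric.ball (x j) r = Metric.thickening r {x j} from
        (Metric.thickening_singleton r (x j)).symm]
      by_contra h
      exact hrB (Set.mem_iUnion.2 ⟨j, pos_iff_ne_zero.2 h⟩)
  choose! r hr0 hrsub hrf using hbox
  set box : (Fin n → Fin l → ℝ) → Set (Fin n → Fin l → ℝ) :=
    fun x => Set.univ.pi fun j => Metric.ball (x j) (r x) with hboxdef
  have hUcov : U = ⋃ x : U, box x := by
    apply Set.eq_of_subset_of_subset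
    · intro y hy
      exact Set.mem_iUnion.2 ⟨⟨y, hy⟩, fun j _ => Metric.mem_ball_self (hr0 y hy)⟩
    · intro y hy
      obtain ⟨x, hx⟩ := Set.mem_iUnion.1 hy
      exact hrsub x x.2 hx
  obtain ⟨T, hTc, hTU⟩ := TopologicalSpace.isOpen_iUnion_countable (fun x : U => box x)
    (fun x => isOpen_set_pi Set.finite_univ fun j _ => Metric.isOpen_ball)
  have hTne : T.Nonempty := by
    rcases Set.eq_empty_or_nonempty T with hT | hT
    · exfalso
      apply hUe
      rw [hUcov, ← hTU, hT]
      simp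
    · exact hT
  obtain ⟨f, hf⟩ := hTc.exists_eq_range hTne
  have hUcov2 : U = ⋃ i : ℕ, box (f i) := by
    apply Set.eq_of_subset_of_subset
    · intro y hy
      have hy2 : y ∈ ⋃ x ∈ T, box (x : U) := by
        rw [hTU]
        exact hUcov ▸ hy
      obtain ⟨x, hxT, hx⟩ := Set.mem_iUnion₂.1 hy2
      obtain ⟨i, rfl⟩ := (hf ▸ hxT : x ∈ Set.range f)
      exact Set.mem_iUnion.2 ⟨i, hx⟩
    · exact Set.iUnion_subset fun i => hrsub (f i) (f i).2
  set s : ℕ → Set (Fin n → Fin l → ℝ) := fun m => ⋃ i ∈ Finset.range m, box (f i) with hs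
  have hmono : Monotone s := fun a b hab =>
    Set.biUnion_subset_biUnion_left (Finset.range_subset_range.2 hab)
  have hsU : ⋃ m, s m = U := by
    rw [hUcov2]
    apply Set.eq_of_subset_of_subset
    · exact Set.iUnion_subset fun m => Set.iUnion₂_subset fun i _ => Set.subset_iUnion (fun i => box ((f i : U) : Fin n → Fin l → ℝ)) i
    · intro y hy
      obtain ⟨i, hi⟩ := Set.mem_iUnion.1 hy
      exact Set.mem_iUnion.2 ⟨i + 1, Set.mem_biUnion (Finset.self_mem_range_succ i) hi⟩
  have hlim : Tendsto (fun m => sampleDist n Q (s m)) atTop (nhds (sampleDist n Q U)) := by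
    have := tendsto_measure_iUnion_atTop (μ := sampleDist n Q) hmono
    rwa [hsU] at this
  have hsub : ∀ m, s m ≤ U := fun m => by
    rw [hUcov2]; exact Set.iUnion₂_subset fun i _ => Set.subset_iUnion (fun i => box ((f i : U) : Fin n → Fin l → ℝ)) i
  apply le_of_tendsto' hlim
  intro m
  have t := aux_tendsto_union_boxes P Q hPQ m
    (fun i j => Metric.ball (((f i : U) : Fin n → Fin l → ℝ) j) (r (f i)))
    (fun i j => Metric.isOpen_ball)
    (fun i j => hrf (f i) (f i).2 j)
  have heq : sampleDist n Q (s m) = atTop.liminf fun k => sampleDist n (P k) (s m) :=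
    (t.liminf_eq).symm
  rw [heq]
  exact liminf_le_liminf (.of_forall fun k => measure_mono (hsub m))

end Aux

section LemB

variable {X : Type*} [MeasurableSpace X] [TopologicalSpace X] [OpensMeasurableSpace X]

lemma aux_stepL {μ : Measure X} {μs : ℕ → Measure X}
    (h_opens : ∀ G, IsOpen G → μ G ≤ atTop.liminf fun k => μs k G)
    {ψ : X → ℝ} (hm : Measurable ψ) (h0 : ∀ x, 0 ≤ ψ x)
    (hD : μ {x | ¬ ContinuousAt ψ x} = 0) :
    ∫⁻ x, ENNReal.ofReal (ψ x) ∂μ ≤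
      atTop.liminf fun k => ∫⁻ x, ENNReal.ofReal (ψ x) ∂μs k := by
  rw [lintegral_eq_lintegral_meas_lt μ (.of_forall h0) hm.aemeasurable]
  have key : ∀ t : ℝ, μ {a | t < ψ a} ≤ atTop.liminf fun k => μs k {a | t < ψ a} := by
    intro t
    have hsub : {a | t < ψ a} ⊆ interior {a | t < ψ a} ∪ {x | ¬ ContinuousAt ψ x} := by
      intro x hx
      by_cases hc : ContinuousAt ψ x
      · exact Or.inl (mem_interior_iff_mem_nhds.2 (hc (Ioi_mem_nhds hx)))
      · exact Or.inr hc
    calc μ {a | t < ψ a} ≤ μ (interior {a | t < ψ a} ∪ {x | ¬ ContinuousAt ψ x}) :=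
          measure_mono hsub
      _ ≤ μ (interior {a | t < ψ a}) + μ {x | ¬ ContinuousAt ψ x} := measure_union_le _ _
      _ = μ (interior {a | t < ψ a}) := by rw [hD, add_zero]
      _ ≤ atTop.liminf fun k => μs k (interior {a | t < ψ a}) := h_opens _ isOpen_interior
      _ ≤ atTop.liminf fun k => μs k {a | t < ψ a} :=
          liminf_le_liminf (.of_forall fun k => measure_mono interior_subset)
  calc ∫⁻ t in Set.Ioi 0, μ {a | t < ψ a}
      ≤ ∫⁻ t in Set.Ioi 0, atTop.liminf fun k => μs k {a | t < ψ a} :=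
        lintegral_mono fun t => key t
    _ ≤ atTop.liminf fun k => ∫⁻ t in Set.Ioi 0, μs k {a | t < ψ a} :=
        lintegral_liminf_le fun k => Antitone.measurable fun u v huv =>
          measure_mono fun ω hω => lt_of_le_of_lt huv hω
    _ = atTop.liminf fun k => ∫⁻ x, ENNReal.ofReal (ψ x) ∂μs k := by
        congr 1
        funext k
        exact (lintegral_eq_lintegral_meas_lt (μs k) (.of_forall h0) hm.aemeasurable).symm

lemma aux_tendsto_integral_of_aecont
    {μ : Measure X} [IsProbabilityMeasure μ] {μs : ℕ → Measure X}
    [∀ k, IsProbabilityMeasure (μs k)]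
    (h_opens : ∀ G, IsOpen G → μ G ≤ atTop.liminf fun k => μs k G)
    {φ : X → ℝ} (hm : Measurable φ) (hb : ∀ x, φ x ∈ Set.Icc (0:ℝ) 1)
    (hD : μ {x | ¬ ContinuousAt φ x} = 0) :
    Tendsto (fun k => ∫ x, φ x ∂ μs k) atTop (nhds (∫ x, φ x ∂μ)) := by
  have h0 : ∀ x, 0 ≤ φ x := fun x => (hb x).1
  have h1 : ∀ x, φ x ≤ 1 := fun x => (hb x).2
  have hgle : ∀ (ν : Measure X) [IsProbabilityMeasure ν] (ψ : X → ℝ), (∀ x, ψ x ≤ 1) →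
      ∫⁻ x, ENNReal.ofReal (ψ x) ∂ν ≤ 1 := by
    intro ν _ ψ hψ1
    calc ∫⁻ x, ENNReal.ofReal (ψ x) ∂ν ≤ ∫⁻ _, 1 ∂ν :=
        lintegral_mono fun x => ENNReal.ofReal_le_one.2 (hψ1 x)
      _ = 1 := by simp
  have real_lim : ∀ ψ : X → ℝ, Measurable ψ → (∀ x, 0 ≤ ψ x) → (∀ x, ψ x ≤ 1) →
      μ {x | ¬ ContinuousAt ψ x} = 0 →
      ∫ x, ψ x ∂μ ≤ atTop.liminf fun k => ∫ x, ψ x ∂μs k := by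
    intro ψ hψ h0' h1' hD'
    have hE := aux_stepL h_opens hψ h0' hD'
    have hbd : ∀ k, (∫⁻ x, ENNReal.ofReal (ψ x) ∂μs k) ≤ 1 := fun k => hgle (μs k) ψ h1'
    have heq : ∀ (ν : Measure X), ∫ x, ψ x ∂ν = (∫⁻ x, ENNReal.ofReal (ψ x) ∂ν).toReal :=
      fun ν => integral_eq_lintegral_of_nonneg_ae (.of_forall h0') hψ.aestronglyMeasurable
    rw [heq μ,
      show (fun k => ∫ x, ψ x ∂μs k) = fun k => (∫⁻ x, ENNReal.ofReal (ψ x) ∂μs k).toReal from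
        funext fun k => heq _,
      ENNReal.liminf_toReal_eq ENNReal.one_ne_top (.of_forall hbd)]
    apply ENNReal.toReal_mono _ hE
    have : (atTop.liminf fun k => ∫⁻ x, ENNReal.ofReal (ψ x) ∂μs k) ≤ 1 :=
      (liminf_le_liminf (.of_forall hbd)).trans_eq (liminf_const 1)
    exact ne_top_of_le_ne_top ENNReal.one_ne_top this
  have hinteg : ∀ (ν : Measure X) [IsProbabilityMeasure ν], Integrable φ ν := by
    intro ν _
    refine Integrable.mono' (integrable_const 1) hm.aestronglyMeasurable
      (.of_forall fun z => ?_)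
    rw [Real.norm_eq_abs, abs_le]
    exact ⟨by linarith [h0 z], h1 z⟩
  have hu0 : ∀ k, 0 ≤ ∫ x, φ x ∂μs k := fun k => integral_nonneg h0
  have hu1 : ∀ k, ∫ x, φ x ∂μs k ≤ 1 := by
    intro k
    have := integral_mono (hinteg (μs k)) (integrable_const 1) h1
    simpa using this
  have lower : ∫ x, φ x ∂μ ≤ atTop.liminf fun k => ∫ x, φ x ∂μs k :=
    real_lim φ hm h0 h1 hD
  have hψD : μ {x | ¬ ContinuousAt (fun y => 1 - φ y) x} = 0 := by
    have hset : {x | ¬ ContinuousAt (fun y => 1 - φ y) x} = {x | ¬ ContinuousAt φ x} := by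
      ext x
      simp only [Set.mem_setOf_eq, not_iff_not]
      constructor
      · intro h
        have := ContinuousAt.sub (continuousAt_const (y := (1:ℝ))) h
        convert this using 1
        funext y
        simp
      · intro h
        exact ContinuousAt.sub (continuousAt_const (y := (1:ℝ))) h
    rw [hset]; exact hD
  have h2 := real_lim (fun y => 1 - φ y) (measurable_const.sub hm)
    (fun x => by show (0:ℝ) ≤ 1 - φ x; linarith [h1 x])
    (fun x => by show 1 - φ x ≤ 1; linarith [h0 x]) hψD
  have heq2 : ∀ (ν : Measure X) [IsProbabilityMeasure ν],
      ∫ x, (1 - φ x) ∂ν = 1 - ∫ x, φ x ∂ν := by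
    intro ν _
    rw [integral_sub (integrable_const 1) (hinteg ν)]
    simp
  rw [heq2 μ, show (fun k => ∫ x, (1 - φ x) ∂μs k) = fun k => 1 - ∫ x, φ x ∂μs k from
    funext fun k => heq2 (μs k)] at h2
  have bdd_above : atTop.IsBoundedUnder (· ≤ ·) (fun k => ∫ x, φ x ∂μs k) :=
    ⟨1, eventually_map.2 (.of_forall hu1)⟩
  have bdd_below : atTop.IsBoundedUnder (· ≥ ·) (fun k => ∫ x, φ x ∂μs k) :=
    ⟨0, eventually_map.2 (.of_forall hu0)⟩
  rw [liminf_const_sub atTop (fun k => ∫ x, φ x ∂μs k) 1 bdd_above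
    bdd_below.isCoboundedUnder_le] at h2
  have upper : atTop.limsup (fun k => ∫ x, φ x ∂μs k) ≤ ∫ x, φ x ∂μ := by linarith
  exact tendsto_of_le_liminf_of_limsup_le lower upper bdd_above bdd_below

end LemB

/-- Theorem 1, sufficiency part: if `𝒫₁` is indistinguishable from `𝒫₀`
in the weak distance, then every test that is a.s. continuous under every alternative has
power limited by size. -/
theorem power_limited_by_size_of_weak_indistinguishable (l n : ℕ) (hl : 1 ≤ l) (hn : 1 ≤ n)
    (𝒫₀ 𝒫₁ : Set (ProbabilityMeasure (Fin l → ℝ)))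
    (hindist : ∀ Q ∈ 𝒫₁, ∃ P : ℕ → ProbabilityMeasure (Fin l → ℝ), (∀ k, P k ∈ 𝒫₀) ∧
      ConvDM (fun k => (P k : Measure (Fin l → ℝ))) (Q : Measure (Fin l → ℝ)))
    (φ : (Fin n → Fin l → ℝ) → ℝ) (hφ : IsTest φ)
    (hcont : ∀ Q ∈ 𝒫₁, ASCont n Q φ) :
    sSup ((fun Q => tpower n Q φ) '' 𝒫₁) ≤ sSup ((fun P => tpower n P φ) '' 𝒫₀) := by
  obtain ⟨hφm, hφb⟩ := hφ
  have htp0 : ∀ P : ProbabilityMeasure (Fin l → ℝ), 0 ≤ tpower n P φ :=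
    fun P => integral_nonneg fun z => (hφb z).1
  have hinteg : ∀ P : ProbabilityMeasure (Fin l → ℝ), Integrable φ (sampleDist n P) := by
    intro P
    refine Integrable.mono' (integrable_const 1) hφm.aestronglyMeasurable
      (.of_forall fun z => ?_)
    rw [Real.norm_eq_abs, abs_le]
    exact ⟨by linarith [(hφb z).1], (hφb z).2⟩
  have htp1 : ∀ P : ProbabilityMeasure (Fin l → ℝ), tpower n P φ ≤ 1 := by
    intro P
    have := integral_mono (hinteg P) (integrable_const 1) fun z => (hφb z).2
    simpa [tpower] using this
  have hbdd : BddAbove ((fun P => tpower n P φ) '' 𝒫₀) := by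
    refine ⟨1, fun y hy => ?_⟩
    obtain ⟨P, _, rfl⟩ := hy
    exact htp1 P
  rcases Set.eq_empty_or_nonempty 𝒫₁ with h1 | ⟨Q0, hQ0⟩
  · rw [h1]
    simp only [Set.image_empty, Real.sSup_empty]
    rcases Set.eq_empty_or_nonempty 𝒫₀ with h0 | ⟨P0, hP0⟩
    · rw [h0]; simp [Real.sSup_empty]
    · exact (htp0 P0).trans (le_csSup hbdd ⟨P0, hP0, rfl⟩)
  · have hRHS0 : 0 ≤ sSup ((fun P => tpower n P φ) '' 𝒫₀) := by
      obtain ⟨P, hP, _⟩ := hindist Q0 hQ0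
      exact (htp0 (P 0)).trans (le_csSup hbdd ⟨P 0, hP 0, rfl⟩)
    apply Real.sSup_le _ hRHS0
    rintro x ⟨Q, hQ, rfl⟩
    obtain ⟨P, hPmem, hconv⟩ := hindist Q hQ
    have hPQ : Tendsto P atTop (nhds Q) := by
      rw [ProbabilityMeasure.tendsto_iff_forall_integral_tendsto]
      intro g
      exact hconv g g.continuous ⟨‖g‖, fun y => by
        rw [← Real.norm_eq_abs]; exact g.norm_coe_le_norm y⟩
    have h_opens : ∀ G, IsOpen G → sampleDist n Q G ≤
        atTop.liminf fun k => sampleDist n (P k) G :=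
      fun G hG => aux_le_liminf_open P Q hPQ G hG
    have hmain : Tendsto (fun k => tpower n (P k) φ) atTop (nhds (tpower n Q φ)) :=
      aux_tendsto_integral_of_aecont h_opens hφm hφb (hcont Q hQ)
    exact le_of_tendsto hmain (Eventually.of_forall fun k => le_csSup hbdd ⟨P k, hPmem k, rfl⟩)
end

section
/- Suppose that for every m ∈ μ(𝒫), 𝒫₁(m) is indistinguishable from 𝒫₀(m) in the weak distance and the test φ_m is a.s. continuous under every Q ∈ 𝒫₁(m). If the confidence set C(Z) = {m : φ_m(Z)=0} has confidence level 1−α, then P^{⊗n}( m ∈ C(Z) ) ≥ 1−α for every P ∈ 𝒫 and every m ∈ μ(𝒫). -/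
open MeasureTheory Filter

section Aux

open Set
open scoped NNReal ENNReal

variable {l n : ℕ}

lemma aux_tendsto_of_convDM {E : Type*} [MeasurableSpace E] [TopologicalSpace E]
    [OpensMeasurableSpace E] (P : ℕ → ProbabilityMeasure E) (Q : ProbabilityMeasure E)
    (h : ConvDM (fun k => (P k : Measure E)) (Q : Measure E)) :
    Tendsto P atTop (nhds Q) := by
  rw [ProbabilityMeasure.tendsto_iff_forall_integral_tendsto]
  intro f
  exact h f f.continuous ⟨‖f‖, fun x => by
    simpa [Real.norm_eq_abs] using f.norm_coe_le_norm x⟩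

lemma aux_countable_bad (Q : ProbabilityMeasure (Fin l → ℝ)) :
    Set.Countable {a : ℝ | ∃ j : Fin l, (Q : Measure (Fin l → ℝ)) {x | x j = a} ≠ 0} := by
  have : {a : ℝ | ∃ j : Fin l, (Q : Measure (Fin l → ℝ)) {x | x j = a} ≠ 0}
      = ⋃ j : Fin l, {a : ℝ | 0 < (Q : Measure (Fin l → ℝ)) {x | x j = a}} := by
    ext a
    simp [pos_iff_ne_zero]
  rw [this]
  refine Set.countable_iUnion fun j => ?_
  apply MeasureTheory.Measure.countable_meas_pos_of_disjoint_of_meas_iUnion_ne_top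
    (Q : Measure (Fin l → ℝ)) (As := fun a : ℝ => {x : Fin l → ℝ | x j = a})
  · intro a
    exact measurable_pi_apply (X := fun _ : Fin l => ℝ) j (MeasurableSet.singleton a)
  · intro a b hab
    simp only [Function.onFun, Set.disjoint_left]
    rintro x rfl h
    exact hab h
  · exact measure_ne_top _ _

lemma aux_frontier_Ioo_subset (a b : ℝ) : frontier (Ioo a b) ⊆ {a, b} := by
  rcases lt_or_ge a b with h | h
  · rw [frontier_Ioo h]
  · rw [Set.Ioo_eq_empty (by exact not_lt.mpr h)]; simp

lemma aux_frontier_univ_pi_subset {ι : Type*} [Fintype ι] {X : ι → Type*}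
    [∀ i, TopologicalSpace (X i)] (t : ∀ i, Set (X i)) :
    frontier (univ.pi t) ⊆ ⋃ i, (fun z => z i) ⁻¹' frontier (t i) := by
  intro z hz
  rw [frontier, closure_pi_set, interior_pi_set finite_univ] at hz
  obtain ⟨h1, h2⟩ := hz
  rw [Set.mem_pi] at h1
  rw [Set.mem_pi] at h2
  push_neg at h2
  obtain ⟨i, hi, hi2⟩ := h2
  exact mem_iUnion.mpr ⟨i, ⟨h1 i trivial, hi2⟩⟩

lemma aux_tendsto_coord_box (P : ℕ → ProbabilityMeasure (Fin l → ℝ))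
    (Q : ProbabilityMeasure (Fin l → ℝ))
    (hPQ : Tendsto P atTop (nhds Q)) (a b : Fin l → ℝ)
    (ha : ∀ j, (Q : Measure (Fin l → ℝ)) {x | x j = a j} = 0)
    (hb : ∀ j, (Q : Measure (Fin l → ℝ)) {x | x j = b j} = 0) :
    Tendsto (fun k => P k (univ.pi fun j => Ioo (a j) (b j))) atTop
      (nhds (Q (univ.pi fun j => Ioo (a j) (b j)))) := by
  apply ProbabilityMeasure.tendsto_measure_of_null_frontier_of_tendsto hPQ
  have h1 : (Q : Measure (Fin l → ℝ)) (frontier (univ.pi fun j => Ioo (a j) (b j))) = 0 := by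
    apply measure_mono_null (aux_frontier_univ_pi_subset _)
    apply measure_iUnion_null
    intro j
    apply measure_mono_null (t := {x : Fin l → ℝ | x j = a j} ∪ {x | x j = b j})
    · intro x hx
      have := aux_frontier_Ioo_subset (a j) (b j) hx
      rcases this with h | h
      · exact Or.inl h
      · exact Or.inr h
    · exact measure_union_null (ha j) (hb j)
  simp only [← ProbabilityMeasure.ennreal_coeFn_eq_coeFn_toMeasure] at h1 ⊢
  exact_mod_cast h1

lemma aux_sampleDist_pi (R : ProbabilityMeasure (Fin l → ℝ)) (C : Fin n → Set (Fin l → ℝ)) :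
    sampleDist n R (univ.pi C) = ((∏ i : Fin n, R (C i) : ℝ≥0) : ℝ≥0∞) := by
  rw [sampleDist, Measure.pi_pi, ENNReal.coe_finset_prod]
  congr 1
  ext i
  exact (ProbabilityMeasure.ennreal_coeFn_eq_coeFn_toMeasure R (C i)).symm

lemma aux_tendsto_prod_box (P : ℕ → ProbabilityMeasure (Fin l → ℝ))
    (Q : ProbabilityMeasure (Fin l → ℝ)) (C : Fin n → Set (Fin l → ℝ))
    (h : ∀ i, Tendsto (fun k => P k (C i)) atTop (nhds (Q (C i)))) :
    Tendsto (fun k => sampleDist n (P k) (univ.pi C)) atTop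
      (nhds (sampleDist n Q (univ.pi C))) := by
  simp only [aux_sampleDist_pi]
  exact ENNReal.tendsto_coe.mpr (tendsto_finset_prod Finset.univ (fun i _ => h i))

lemma aux_tendsto_measure_finset_biUnion
    {Ω : Type*} [MeasurableSpace Ω] (μ : Measure Ω) (μs : ℕ → Measure Ω)
    [IsFiniteMeasure μ] [∀ k, IsFiniteMeasure (μs k)]
    (GB : Set Ω → Prop)
    (hGBmeas : ∀ S, GB S → MeasurableSet S)
    (hGBinter : ∀ S T, GB S → GB T → GB (S ∩ T))
    (hGBtendsto : ∀ S, GB S → Tendsto (fun k => μs k S) atTop (nhds (μ S))) :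
    ∀ (T : Finset ℕ) (u : ℕ → Set Ω), (∀ r ∈ T, GB (u r)) →
      Tendsto (fun k => μs k (⋃ r ∈ T, u r)) atTop (nhds (μ (⋃ r ∈ T, u r))) := by
  intro T
  induction T using Finset.induction_on with
  | empty =>
      intro u _
      simp only [Finset.notMem_empty, iUnion_of_empty, iUnion_empty, measure_empty]
      exact tendsto_const_nhds
  | @insert a T haT IH =>
      intro u hu
      have ha : GB (u a) := hu a (Finset.mem_insert_self a T)
      have hT : ∀ r ∈ T, GB (u r) := fun r hr => hu r (Finset.mem_insert_of_mem hr)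
      have hUmeas : MeasurableSet (⋃ r ∈ T, u r) :=
        MeasurableSet.biUnion T.countable_toSet (fun r hr => hGBmeas _ (hT r hr))
      have hInterEq : u a ∩ ⋃ r ∈ T, u r = ⋃ r ∈ T, (u a ∩ u r) := by
        rw [inter_iUnion₂]
      have hIU : Tendsto (fun k => μs k (u a ∩ ⋃ r ∈ T, u r)) atTop
          (nhds (μ (u a ∩ ⋃ r ∈ T, u r))) := by
        rw [hInterEq]
        exact IH (fun r => u a ∩ u r) (fun r hr => hGBinter _ _ ha (hT r hr))
      have hU : Tendsto (fun k => μs k (⋃ r ∈ T, u r)) atTop (nhds (μ (⋃ r ∈ T, u r))) :=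
        IH u hT
      have key : ∀ (ν : Measure Ω) [IsFiniteMeasure ν],
          ν (⋃ r ∈ insert a T, u r)
            = (ν (u a) + ν (⋃ r ∈ T, u r)) - ν (u a ∩ ⋃ r ∈ T, u r) := by
        intro ν _
        rw [Finset.set_biUnion_insert, ← measure_union_add_inter (u a) hUmeas,
          ENNReal.add_sub_cancel_right (measure_ne_top _ _)]
      simp only [key]
      exact ENNReal.Tendsto.sub ((hGBtendsto _ ha).add hU) hIU
        (Or.inl (ENNReal.add_ne_top.mpr ⟨measure_ne_top _ _, measure_ne_top _ _⟩))

lemma aux_le_liminf_of_basis {Ω : Type*} [MeasurableSpace Ω] [TopologicalSpace Ω]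
    [SecondCountableTopology Ω]
    (μ : Measure Ω) (μs : ℕ → Measure Ω) [IsFiniteMeasure μ] [∀ k, IsFiniteMeasure (μs k)]
    (GB : Set Ω → Prop) (hGBopen : ∀ S, GB S → IsOpen S)
    (hGBunion : ∀ (T : Finset ℕ) (u : ℕ → Set Ω), (∀ r ∈ T, GB (u r)) →
      Tendsto (fun k => μs k (⋃ r ∈ T, u r)) atTop (nhds (μ (⋃ r ∈ T, u r))))
    (hbasis : ∀ G, IsOpen G → ∀ z ∈ G, ∃ S, GB S ∧ z ∈ S ∧ S ⊆ G) :
    ∀ G, IsOpen G → μ G ≤ atTop.liminf (fun k => μs k G) := by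
  intro G hG
  set 𝒮 : Set (Set Ω) := {S | GB S ∧ S ⊆ G} with h𝒮
  have hGeq : G = ⋃₀ 𝒮 := by
    apply Set.Subset.antisymm
    · intro z hz
      obtain ⟨S, hS1, hS2, hS3⟩ := hbasis G hG z hz
      exact ⟨S, ⟨hS1, hS3⟩, hS2⟩
    · intro z hz
      obtain ⟨S, hS, hzS⟩ := hz
      exact hS.2 hzS
  obtain ⟨T, hTc, hT𝒮, hTeq⟩ := TopologicalSpace.isOpen_sUnion_countable 𝒮
    (fun S hS => hGBopen S hS.1)
  rcases T.eq_empty_or_nonempty with rfl | hTne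
  · have : G = ∅ := by rw [hGeq, ← hTeq]; simp
    simp [this]
  · obtain ⟨u, hu⟩ := Set.Countable.exists_eq_range hTc hTne
    have huGB : ∀ r, GB (u r) := by
      intro r
      have : u r ∈ T := hu ▸ Set.mem_range_self r
      exact (hT𝒮 this).1
    have hGU : G = ⋃ r, u r := by
      rw [hGeq, ← hTeq, hu, Set.sUnion_range]
    set V : ℕ → Set Ω := fun N => ⋃ r ∈ Finset.range N, u r with hV
    have hVmono : Monotone V := by
      intro M N hMN
      exact Set.biUnion_subset_biUnion_left (Finset.range_subset_range.mpr hMN)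
    have hVU : ⋃ N, V N = G := by
      rw [hGU]
      apply Set.Subset.antisymm
      · exact Set.iUnion_subset fun N =>
          Set.iUnion₂_subset fun r _ => Set.subset_iUnion u r
      · intro z hz
        obtain ⟨r, hr⟩ := Set.mem_iUnion.mp hz
        exact Set.mem_iUnion.mpr ⟨r + 1, Set.mem_biUnion (Finset.self_mem_range_succ r) hr⟩
    have htend : Tendsto (fun N => μ (V N)) atTop (nhds (μ G)) := by
      rw [← hVU]
      exact tendsto_measure_iUnion_atTop hVmono
    apply le_of_tendsto htend
    filter_upwards with N
    have h1 : Tendsto (fun k => μs k (V N)) atTop (nhds (μ (V N))) :=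
      hGBunion (Finset.range N) u (fun r _ => huGB r)
    have h2 : ∀ k, μs k (V N) ≤ μs k G := fun k =>
      measure_mono (by rw [hGU]; exact Set.iUnion₂_subset fun r _ => Set.subset_iUnion u r)
    calc μ (V N) = atTop.liminf (fun k => μs k (V N)) := h1.liminf_eq.symm
      _ ≤ atTop.liminf (fun k => μs k G) := liminf_le_liminf (Eventually.of_forall h2)

/-- A "good box" in the sample space. -/
def auxBox (a b : Fin n → Fin l → ℝ) : Set (Fin n → Fin l → ℝ) :=
  univ.pi (fun i => univ.pi fun j => Ioo (a i j) (b i j))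

lemma aux_mem_box {a b z : Fin n → Fin l → ℝ} :
    z ∈ auxBox a b ↔ ∀ i j, z i j ∈ Ioo (a i j) (b i j) := by
  simp [auxBox, Set.mem_pi]

lemma aux_box_inter (a b a' b' : Fin n → Fin l → ℝ) :
    auxBox a b ∩ auxBox a' b'
      = auxBox (fun i j => max (a i j) (a' i j)) (fun i j => min (b i j) (b' i j)) := by
  ext z
  simp only [Set.mem_inter_iff, aux_mem_box, Set.mem_Ioo, max_lt_iff, lt_min_iff]
  constructor
  · rintro ⟨h1, h2⟩ i j
    exact ⟨⟨(h1 i j).1, (h2 i j).1⟩, (h1 i j).2, (h2 i j).2⟩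
  · intro h
    exact ⟨fun i j => ⟨(h i j).1.1, (h i j).2.1⟩, fun i j => ⟨(h i j).1.2, (h i j).2.2⟩⟩

lemma aux_box_open (a b : Fin n → Fin l → ℝ) : IsOpen (auxBox a b) :=
  isOpen_set_pi finite_univ fun _ _ => isOpen_set_pi finite_univ fun _ _ => isOpen_Ioo

lemma aux_basis_good_boxes (Good : Set ℝ) (hdense : Dense Good)
    (G : Set (Fin n → Fin l → ℝ)) (hG : IsOpen G) (z : Fin n → Fin l → ℝ) (hz : z ∈ G) :
    ∃ a b : Fin n → Fin l → ℝ, (∀ i j, a i j ∈ Good ∧ b i j ∈ Good) ∧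
      z ∈ auxBox a b ∧ auxBox a b ⊆ G := by
  obtain ⟨δ, hδ, hball⟩ := Metric.isOpen_iff.mp hG z hz
  have h2 : (0:ℝ) < δ / 2 := by linarith
  have ha : ∀ i j, ∃ x ∈ Good, x ∈ Ioo (z i j - δ/2) (z i j) := by
    intro i j
    exact hdense.exists_mem_open isOpen_Ioo ⟨z i j - δ/4, by constructor <;> linarith⟩
  have hb : ∀ i j, ∃ x ∈ Good, x ∈ Ioo (z i j) (z i j + δ/2) := by
    intro i j
    exact hdense.exists_mem_open isOpen_Ioo ⟨z i j + δ/4, by constructor <;> linarith⟩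
  choose a haG haI using ha
  choose b hbG hbI using hb
  refine ⟨a, b, fun i j => ⟨haG i j, hbG i j⟩, ?_, ?_⟩
  · rw [aux_mem_box]
    intro i j
    exact ⟨(haI i j).2, (hbI i j).1⟩
  · intro w hw
    apply hball
    rw [Metric.mem_ball]
    have : dist w z ≤ δ / 2 := by
      rw [dist_pi_le_iff h2.le]
      intro i
      rw [dist_pi_le_iff h2.le]
      intro j
      rw [Real.dist_eq, abs_le]
      have h1 := (aux_mem_box.mp hw) i j
      have h3 := haI i j
      have h4 := hbI i j
      constructor <;> [nlinarith [h1.1, h3.1]; nlinarith [h1.2, h4.2]]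
    linarith

lemma aux_frontier_test_subset {Ω : Type*} [TopologicalSpace Ω] (f : Ω → ℝ)
    (hf : ∀ z, f z = 0 ∨ f z = 1) :
    frontier {z | f z = 0} ⊆ {z | ¬ ContinuousAt f z} := by
  intro z hz
  intro hcont
  rw [frontier_eq_closure_inter_closure] at hz
  obtain ⟨h1, h2⟩ := hz
  have hc0 : f z ∈ closure (f '' {w | f w = 0}) :=
    hcont.continuousWithinAt.mem_closure_image h1
  have hc1 : f z ∈ closure (f '' {w | f w = 0}ᶜ) :=
    hcont.continuousWithinAt.mem_closure_image h2
  have e0 : f z = 0 := by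
    have : closure (f '' {w | f w = 0}) ⊆ {0} := by
      apply closure_minimal _ isClosed_singleton
      rintro x ⟨w, hw, rfl⟩
      exact hw
    exact this hc0
  have e1 : f z = 1 := by
    have : closure (f '' {w | f w = 0}ᶜ) ⊆ {1} := by
      apply closure_minimal _ isClosed_singleton
      rintro x ⟨w, hw, rfl⟩
      rcases hf w with h | h
      · exact absurd h hw
      · exact h
    exact this hc1
  rw [e0] at e1
  norm_num at e1

/-- The main convergence lemma: `P_k → Q` weakly implies `P_k^{⊗n}(E) → Q^{⊗n}(E)` for every
set `E` whose frontier is `Q^{⊗n}`-null. -/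
lemma aux_tendsto_sampleDist (P : ℕ → ProbabilityMeasure (Fin l → ℝ))
    (Q : ProbabilityMeasure (Fin l → ℝ)) (hPQ : Tendsto P atTop (nhds Q))
    (E : Set (Fin n → Fin l → ℝ)) (hE : sampleDist n Q (frontier E) = 0) :
    Tendsto (fun k => sampleDist n (P k) E) atTop (nhds (sampleDist n Q E)) := by
  have hprob : ∀ R : ProbabilityMeasure (Fin l → ℝ), IsProbabilityMeasure (sampleDist n R) := by
    intro R
    rw [sampleDist]
    infer_instance
  have _ := hprob Q
  have _ := fun k => hprob (P k)
  apply tendsto_measure_of_null_frontier _ hE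
  -- the liminf condition on open sets
  set Bad : Set ℝ := {a : ℝ | ∃ j : Fin l, (Q : Measure (Fin l → ℝ)) {x | x j = a} ≠ 0} with hBad
  have hBadc : Set.Countable Bad := aux_countable_bad Q
  have hdense : Dense Badᶜ := Set.Countable.dense_compl ℝ hBadc
  set GB : Set (Fin n → Fin l → ℝ) → Prop :=
    fun S => ∃ a b : Fin n → Fin l → ℝ, (∀ i j, a i j ∈ Badᶜ ∧ b i j ∈ Badᶜ) ∧ S = auxBox a b
    with hGB
  have hGBopen : ∀ S, GB S → IsOpen S := by
    rintro S ⟨a, b, _, rfl⟩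
    exact aux_box_open a b
  have hGBmeas : ∀ S, GB S → MeasurableSet S := fun S hS => (hGBopen S hS).measurableSet
  have hGBinter : ∀ S T, GB S → GB T → GB (S ∩ T) := by
    rintro S T ⟨a, b, hab, rfl⟩ ⟨a', b', hab', rfl⟩
    refine ⟨fun i j => max (a i j) (a' i j), fun i j => min (b i j) (b' i j), ?_,
      aux_box_inter a b a' b'⟩
    intro i j
    constructor
    · show a i j ⊔ a' i j ∈ Badᶜ
      rcases max_choice (a i j) (a' i j) with h | h <;> rw [h]
      · exact (hab i j).1
      · exact (hab' i j).1
    · show b i j ⊓ b' i j ∈ Badᶜ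
      rcases min_choice (b i j) (b' i j) with h | h <;> rw [h]
      · exact (hab i j).2
      · exact (hab' i j).2
  have hGBtendsto : ∀ S, GB S →
      Tendsto (fun k => sampleDist n (P k) S) atTop (nhds (sampleDist n Q S)) := by
    rintro S ⟨a, b, hab, rfl⟩
    apply aux_tendsto_prod_box
    intro i
    apply aux_tendsto_coord_box P Q hPQ (a i) (b i)
    · intro j
      by_contra hne
      exact (hab i j).1 ⟨j, hne⟩
    · intro j
      by_contra hne
      exact (hab i j).2 ⟨j, hne⟩
  apply aux_le_liminf_of_basis _ _ GB hGBopen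
    (aux_tendsto_measure_finset_biUnion _ _ GB hGBmeas hGBinter hGBtendsto)
  intro G hG z hz
  obtain ⟨a, b, hab, hzb, hbG⟩ := aux_basis_good_boxes Badᶜ hdense G hG z hz
  exact ⟨auxBox a b, ⟨a, b, hab, rfl⟩, hzb, hbG⟩

end Aux

/-- Theorem 2, first part: under weak-distance indistinguishability of
`𝔓₁(m)` from `𝔓₀(m)` for each `m ∈ μ(𝔓)` and a.s. continuity of each test `φ m` under
every alternative, a confidence level of `1 − α` for the inverted confidence set forces
every value `m ∈ μ(𝔓)` to be covered with probability at least `1 − α` under every `P`. -/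
theorem confidence_set_covers_everything (l n : ℕ) (hl : 1 ≤ l) (hn : 1 ≤ n)
    (𝔓 : Set (ProbabilityMeasure (Fin l → ℝ)))
    (μ : ProbabilityMeasure (Fin l → ℝ) → ℝ)
    (φ : ℝ → (Fin n → Fin l → ℝ) → ℝ)
    (hφ : ∀ m, Measurable (φ m) ∧ ∀ z, φ m z = 0 ∨ φ m z = 1)
    (hindist : ∀ m ∈ μ '' 𝔓, ∀ Q ∈ 𝔓, μ Q ≠ m →
      ∃ P : ℕ → ProbabilityMeasure (Fin l → ℝ), (∀ k, P k ∈ 𝔓 ∧ μ (P k) = m) ∧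
        ConvDM (fun k => (P k : Measure (Fin l → ℝ))) (Q : Measure (Fin l → ℝ)))
    (hcont : ∀ m ∈ μ '' 𝔓, ∀ Q ∈ 𝔓, μ Q ≠ m → ASCont n Q (φ m))
    (α : ℝ)
    (hconf : sInf ((fun P => (sampleDist n P {z | μ P ∈ μ '' 𝔓 ∧ φ (μ P) z = 0}).toReal) '' 𝔓)
      = 1 - α) :
    ∀ P ∈ 𝔓, ∀ m ∈ μ '' 𝔓,
      1 - α ≤ (sampleDist n P {z | m ∈ μ '' 𝔓 ∧ φ m z = 0}).toReal := by
  intro P hP m hm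
  have hbdd : BddBelow ((fun P => (sampleDist n P
      {z | μ P ∈ μ '' 𝔓 ∧ φ (μ P) z = 0}).toReal) '' 𝔓) := by
    refine ⟨0, ?_⟩
    rintro x ⟨R, _, rfl⟩
    exact ENNReal.toReal_nonneg
  have hkey : ∀ R ∈ 𝔓, μ R = m →
      1 - α ≤ (sampleDist n R {z | m ∈ μ '' 𝔓 ∧ φ m z = 0}).toReal := by
    intro R hR hRm
    have hmem : (sampleDist n R {z | μ R ∈ μ '' 𝔓 ∧ φ (μ R) z = 0}).toReal
        ∈ ((fun P => (sampleDist n P {z | μ P ∈ μ '' 𝔓 ∧ φ (μ P) z = 0}).toReal) '' 𝔓) :=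
      ⟨R, hR, rfl⟩
    have := csInf_le hbdd hmem
    rw [hconf] at this
    rw [hRm] at this
    exact this
  by_cases hPm : μ P = m
  · exact hkey P hP hPm
  · obtain ⟨Pk, hPk, hconv⟩ := hindist m hm P hP hPm
    have hPQ : Tendsto Pk atTop (nhds P) := aux_tendsto_of_convDM Pk P hconv
    set E : Set (Fin n → Fin l → ℝ) := {z | m ∈ μ '' 𝔓 ∧ φ m z = 0} with hE
    have hEeq : E = {z | φ m z = 0} := by
      ext z
      simp [hE, hm]
    have hfront : sampleDist n P (frontier E) = 0 := by
      apply measure_mono_null _ (hcont m hm P hP hPm)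
      rw [hEeq]
      exact aux_frontier_test_subset (φ m) (hφ m).2
    have htend := aux_tendsto_sampleDist Pk P hPQ E hfront
    have hprob : ∀ R : ProbabilityMeasure (Fin l → ℝ),
        IsProbabilityMeasure (sampleDist n R) := by
      intro R
      rw [sampleDist]
      infer_instance
    have _ := hprob P
    have htendR : Tendsto (fun k => (sampleDist n (Pk k) E).toReal) atTop
        (nhds ((sampleDist n P E).toReal)) :=
      (ENNReal.tendsto_toReal (measure_ne_top _ _)).comp htend
    apply ge_of_tendsto htendR
    filter_upwards with k
    exact hkey (Pk k) (hPk k).1 (hPk k).2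
end

section
/- Suppose that for every m ∈ μ(𝒫), 𝒫₁(m) is indistinguishable from 𝒫₀(m) in the weak distance and the test φ_m is a.s. continuous under every Q ∈ 𝒫₁(m). If the confidence set C(Z) = {m : φ_m(Z)=0} has confidence level 1−α with 1−α > 0, and μ(𝒫) is an unbounded subset of ℝ, then for every P ∈ 𝒫 the set C(Z) is unbounded with strictly positive probability under P^{⊗n}. -/
open MeasureTheory Filter

namespace CSU
open Metric

lemma lipMaxZero : LipschitzWith 1 (fun a : ℝ => max a 0) :=
  LipschitzWith.of_dist_le_mul fun a b => by
    simpa [Real.dist_eq] using abs_max_sub_max_le_abs a b 0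

lemma lipConstSub (c : ℝ) : LipschitzWith 1 (fun a : ℝ => c - a) :=
  LipschitzWith.of_dist_le_mul fun a b => by
    simp only [NNReal.coe_one, one_mul, Real.dist_eq]
    rw [show c - a - (c - b) = -(a - b) by ring, abs_neg]

lemma lipSubConst (c : ℝ) : LipschitzWith 1 (fun a : ℝ => a - c) :=
  LipschitzWith.of_dist_le_mul fun a b => by
    simp only [NNReal.coe_one, one_mul, Real.dist_eq]
    rw [show a - c - (b - c) = a - b by ring]

variable {X : Type*} [PseudoMetricSpace X]

lemma lipDistPt (x₀ : X) : LipschitzWith 1 (fun x => dist x x₀) :=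
  LipschitzWith.of_le_add fun x y => by
    have := dist_triangle x y x₀; linarith [this]

/-- cutoff: 1 on closedBall x₀ R, 0 outside closedBall x₀ (R+1) -/
noncomputable def cutoff (x₀ : X) (R : ℝ) (x : X) : ℝ :=
  max (1 - max (dist x x₀ - R) 0) 0

lemma cutoff_lip (x₀ : X) (R : ℝ) : LipschitzWith 1 (cutoff x₀ R) := by
  have h := lipMaxZero.comp ((lipConstSub 1).comp (lipMaxZero.comp
    ((lipSubConst R).comp (lipDistPt x₀))))
  show LipschitzWith 1 (fun x => max (1 - max (dist x x₀ - R) 0) 0)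
  simpa [cutoff, Function.comp_def] using h

lemma cutoff_nonneg (x₀ : X) (R : ℝ) (x : X) : 0 ≤ cutoff x₀ R x := le_max_right _ _

lemma cutoff_le_one (x₀ : X) (R : ℝ) (x : X) : cutoff x₀ R x ≤ 1 := by
  unfold cutoff
  have : 1 - max (dist x x₀ - R) 0 ≤ 1 := by
    have := le_max_right (dist x x₀ - R) 0; linarith
  exact max_le this zero_le_one

lemma cutoff_abs_le_one (x₀ : X) (R : ℝ) (x : X) : |cutoff x₀ R x| ≤ 1 :=
  abs_le.2 ⟨by linarith [cutoff_nonneg x₀ R x], cutoff_le_one x₀ R x⟩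

lemma indicator_le_cutoff (x₀ : X) (R : ℝ) (x : X) :
    Set.indicator (closedBall x₀ R) (fun _ => (1:ℝ)) x ≤ cutoff x₀ R x := by
  by_cases hx : x ∈ closedBall x₀ R
  · rw [Set.indicator_of_mem hx]
    have hd : dist x x₀ - R ≤ 0 := by simpa [mem_closedBall] using sub_nonpos.2 (mem_closedBall.1 hx)
    unfold cutoff
    rw [max_eq_right hd]
    simp
  · rw [Set.indicator_of_notMem hx]; exact cutoff_nonneg _ _ _

lemma cutoff_le_indicator (x₀ : X) (R : ℝ) (x : X) :
    cutoff x₀ R x ≤ Set.indicator (closedBall x₀ (R+1)) (fun _ => (1:ℝ)) x := by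
  by_cases hx : x ∈ closedBall x₀ (R+1)
  · rw [Set.indicator_of_mem hx]; exact cutoff_le_one _ _ _
  · rw [Set.indicator_of_notMem hx]
    have hd : (1:ℝ) < dist x x₀ - R := by
      have := mem_closedBall.not.1 hx; push_neg at this; linarith
    unfold cutoff
    have h1 : max (dist x x₀ - R) 0 = dist x x₀ - R := max_eq_left (by linarith)
    rw [h1, max_eq_right (by linarith)]


variable {X : Type*} [MeasurableSpace X] [PseudoMetricSpace X]

/-- convergence against bounded Lipschitz test functions -/
def ConvLip (μ : ℕ → Measure X) (ν : Measure X) : Prop :=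
  ∀ (g : X → ℝ) (L : NNReal) (C : ℝ), LipschitzWith L g → (∀ x, |g x| ≤ C) →
    Tendsto (fun k => ∫ x, g x ∂ μ k) atTop (nhds (∫ x, g x ∂ ν))

lemma integrable_of_bdd [OpensMeasurableSpace X] {μ : Measure X} [IsFiniteMeasure μ]
    {g : X → ℝ} (hc : Continuous g) {C : ℝ} (hb : ∀ x, |g x| ≤ C) : Integrable g μ := by
  have := (BoundedContinuousFunction.ofNormedAddCommGroup g hc C
    (fun x => by simpa [Real.norm_eq_abs] using hb x)).integrable μ
  simpa using this

lemma single_tight [OpensMeasurableSpace X] (ρ : Measure X) [IsProbabilityMeasure ρ] (x₀ : X)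
    {δ : ℝ} (hδ : 0 < δ) : ∃ R : ℕ, 1 - δ < (ρ (closedBall x₀ R)).toReal := by
  have hmono : Monotone (fun R : ℕ => closedBall x₀ (R:ℝ)) := fun a b hab =>
    closedBall_subset_closedBall (by exact_mod_cast hab)
  have hU : (⋃ R : ℕ, closedBall x₀ (R:ℝ)) = Set.univ := by
    refine Set.eq_univ_of_forall fun x => Set.mem_iUnion.2 ?_
    obtain ⟨R, hR⟩ := exists_nat_ge (dist x x₀)
    exact ⟨R, mem_closedBall.2 hR⟩
  have h1 := tendsto_measure_iUnion_atTop (μ := ρ) hmono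
  rw [hU, measure_univ] at h1
  have h2 : Tendsto (fun R : ℕ => (ρ (closedBall x₀ (R:ℝ))).toReal) atTop (nhds 1) := by
    have : Tendsto ENNReal.toReal (nhds (1:ENNReal)) (nhds ((1:ENNReal).toReal)) :=
      (ENNReal.tendsto_toReal (by simp))
    simpa [Function.comp_def] using this.comp h1
  exact ((tendsto_order.1 h2).1 (1-δ) (by linarith)).exists

lemma toReal_compl [OpensMeasurableSpace X] (ρ : Measure X) [IsProbabilityMeasure ρ] {K : Set X}
    (hK : MeasurableSet K) : (ρ Kᶜ).toReal = 1 - (ρ K).toReal := by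
  have h := measure_add_measure_compl (μ := ρ) hK
  have h2 := congrArg ENNReal.toReal h
  rw [ENNReal.toReal_add (measure_ne_top _ _) (measure_ne_top _ _)] at h2
  simp at h2; linarith

lemma tight [OpensMeasurableSpace X] [ProperSpace X] [Nonempty X]
    (μ : ℕ → Measure X) (ν : Measure X) [∀ k, IsProbabilityMeasure (μ k)]
    [IsProbabilityMeasure ν] (h : ConvLip μ ν) {ε : ℝ} (hε : 0 < ε) :
    ∃ K : Set X, IsCompact K ∧ MeasurableSet K ∧ ∀ k, ((μ k) Kᶜ).toReal ≤ ε := by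
  obtain ⟨x₀⟩ := (inferInstance : Nonempty X)
  obtain ⟨R₀, hR₀⟩ := single_tight ν x₀ (half_pos hε)
  -- integral of cutoff vs measures
  have hcub : ∀ (ρ : Measure X) [IsProbabilityMeasure ρ] (R : ℝ),
      (ρ (closedBall x₀ R)).toReal ≤ ∫ x, cutoff x₀ R x ∂ρ ∧
      ∫ x, cutoff x₀ R x ∂ρ ≤ (ρ (closedBall x₀ (R+1))).toReal := by
    intro ρ _ R
    have hint : Integrable (cutoff x₀ R) ρ :=
      integrable_of_bdd (cutoff_lip x₀ R).continuous (cutoff_abs_le_one x₀ R)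
    have hind : ∀ r : ℝ, Integrable (Set.indicator (closedBall x₀ r) (fun _ => (1:ℝ))) ρ :=
      fun r => (integrable_const 1).indicator measurableSet_closedBall
    constructor
    · calc (ρ (closedBall x₀ R)).toReal
          = ∫ x, Set.indicator (closedBall x₀ R) (fun _ => (1:ℝ)) x ∂ρ := by
            rw [integral_indicator_const (1:ℝ) measurableSet_closedBall]; simp [Measure.real]
        _ ≤ ∫ x, cutoff x₀ R x ∂ρ :=
            integral_mono (hind R) hint (indicator_le_cutoff x₀ R)
    · calc ∫ x, cutoff x₀ R x ∂ρ
          ≤ ∫ x, Set.indicator (closedBall x₀ (R+1)) (fun _ => (1:ℝ)) x ∂ρ :=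
            integral_mono hint (hind (R+1)) (cutoff_le_indicator x₀ R)
        _ = (ρ (closedBall x₀ (R+1))).toReal := by
            rw [integral_indicator_const (1:ℝ) measurableSet_closedBall]; simp [Measure.real]
  have hlim := h (cutoff x₀ R₀) 1 1 (cutoff_lip x₀ R₀) (cutoff_abs_le_one x₀ R₀)
  have hgt : 1 - ε < ∫ x, cutoff x₀ (R₀:ℝ) x ∂ν := by
    have := (hcub ν R₀).1
    linarith
  obtain ⟨K₀, hK₀⟩ := (atTop_basis.eventually_iff.1 ((tendsto_order.1 hlim).1 (1-ε) hgt))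
  obtain ⟨hK₀', hK₀⟩ := hK₀
  -- for k < K₀ pick individual radii
  have hsingle : ∀ k : ℕ, ∃ R : ℕ, 1 - ε < ((μ k) (closedBall x₀ R)).toReal :=
    fun k => single_tight (μ k) x₀ hε
  choose r hr using hsingle
  set M : ℕ := max (R₀ + 1) ((Finset.range K₀).sup r) with hM
  refine ⟨closedBall x₀ M, isCompact_closedBall x₀ M, measurableSet_closedBall, fun k => ?_⟩
  have hKey : 1 - ε ≤ ((μ k) (closedBall x₀ (M:ℝ))).toReal := by
    rcases le_or_gt K₀ k with hk | hk
    · have h1 := hK₀ (Set.mem_Ici.2 hk)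
      have h2 := (hcub (μ k) R₀).2
      have h3 : ((μ k) (closedBall x₀ ((R₀:ℝ)+1))).toReal ≤ ((μ k) (closedBall x₀ (M:ℝ))).toReal := by
        apply ENNReal.toReal_mono (measure_ne_top _ _)
        apply measure_mono (closedBall_subset_closedBall ?_)
        have : (R₀ + 1 : ℕ) ≤ M := le_max_left _ _
        exact_mod_cast this
      linarith
    · have h1 := hr k
      have h3 : ((μ k) (closedBall x₀ ((r k : ℕ):ℝ))).toReal ≤ ((μ k) (closedBall x₀ (M:ℝ))).toReal := by
        apply ENNReal.toReal_mono (measure_ne_top _ _)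
        apply measure_mono (closedBall_subset_closedBall ?_)
        have : r k ≤ M := le_trans (Finset.le_sup (Finset.mem_range.2 hk)) (le_max_right _ _)
        exact_mod_cast this
      linarith
  rw [toReal_compl (μ k) measurableSet_closedBall]
  linarith

lemma unif_compact {h : ℕ → X → ℝ} {L : NNReal} (hl : ∀ k, LipschitzWith L (h k))
    (hp : ∀ x, Tendsto (fun k => h k x) atTop (nhds 0)) {K : Set X} (hK : IsCompact K)
    {ε : ℝ} (hε : 0 < ε) : ∀ᶠ k in atTop, ∀ x ∈ K, |h k x| ≤ ε := by
  have hLpos : (0:ℝ) < 2 * ((L:ℝ) + 1) := by positivity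
  set δ : ℝ := ε / (2 * ((L:ℝ) + 1)) with hδdef
  have hδ : 0 < δ := by positivity
  obtain ⟨t, htK, hcov⟩ := hK.elim_nhds_subcover (fun x => ball x δ)
    (fun x _ => ball_mem_nhds x hδ)
  have hev : ∀ᶠ k in atTop, ∀ y ∈ t, |h k y| ≤ ε / 2 := by
    rw [Filter.eventually_all_finset]
    intro y _
    have := (hp y).eventually (Metric.ball_mem_nhds (0:ℝ) (half_pos hε))
    filter_upwards [this] with k hk
    have := mem_ball.1 hk
    rw [Real.dist_eq, sub_zero] at this
    linarith
  filter_upwards [hev] with k hk x hx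
  obtain ⟨y, hyt, hxy⟩ := Set.mem_iUnion₂.1 (hcov hx)
  have hd : dist (h k x) (h k y) ≤ (L:ℝ) * δ := by
    calc dist (h k x) (h k y) ≤ (L:ℝ) * dist x y := (hl k).dist_le_mul x y
      _ ≤ (L:ℝ) * δ :=
          mul_le_mul_of_nonneg_left (le_of_lt (mem_ball.1 hxy)) L.coe_nonneg
  have hLδ : (L:ℝ) * δ ≤ ε / 2 := by
    have hde : δ * (2*((L:ℝ)+1)) = ε := div_mul_cancel₀ _ (ne_of_gt hLpos)
    nlinarith [hδ.le]
  have h1 := hk y hyt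
  calc |h k x| = |h k y + (h k x - h k y)| := by ring_nf
    _ ≤ |h k y| + |h k x - h k y| := abs_add_le _ _
    _ ≤ ε / 2 + (L:ℝ) * δ := by
        have : |h k x - h k y| = dist (h k x) (h k y) := (Real.dist_eq _ _).symm
        rw [this]; exact add_le_add h1 hd
    _ ≤ ε := by linarith

lemma tendsto_integral_zero [OpensMeasurableSpace X]
    (μ : ℕ → Measure X) [∀ k, IsProbabilityMeasure (μ k)]
    (htight : ∀ ε : ℝ, 0 < ε → ∃ K : Set X, IsCompact K ∧ MeasurableSet K ∧
      ∀ k, ((μ k) Kᶜ).toReal ≤ ε)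
    {h : ℕ → X → ℝ} {L : NNReal} {C : ℝ}
    (hl : ∀ k, LipschitzWith L (h k)) (hb : ∀ k x, |h k x| ≤ C)
    (hp : ∀ x, Tendsto (fun k => h k x) atTop (nhds 0)) :
    Tendsto (fun k => ∫ x, h k x ∂ μ k) atTop (nhds 0) := by
  rw [NormedAddCommGroup.tendsto_nhds_zero]
  intro ε hε
  set D : ℝ := max C 0 with hD
  have hb' : ∀ k x, |h k x| ≤ D := fun k x => le_trans (hb k x) (le_max_left _ _)
  have hC0 : 0 ≤ D := le_max_right _ _
  have hCpos : (0:ℝ) < 3 * (D + 1) := by positivity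
  obtain ⟨K, hKc, hKm, hKt⟩ := htight (ε / (3 * (D+1))) (by positivity)
  have hev := unif_compact hl hp hKc (show (0:ℝ) < ε/3 by positivity)
  filter_upwards [hev] with k hk
  have hint : Integrable (h k) (μ k) :=
    integrable_of_bdd (hl k).continuous (hb k)
  have hintr : Integrable (fun x => ε/3 + Set.indicator Kᶜ (fun _ => D) x) (μ k) :=
    (integrable_const _).add ((integrable_const D).indicator hKm.compl)
  have hmono : ∀ x, |h k x| ≤ ε/3 + Set.indicator Kᶜ (fun _ => D) x := by
    intro x
    by_cases hx : x ∈ K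
    · rw [Set.indicator_of_notMem (by simpa using hx), add_zero]
      exact hk x hx
    · rw [Set.indicator_of_mem (by simpa using hx)]
      linarith [hb' k x]
  calc ‖∫ x, h k x ∂ μ k‖ ≤ ∫ x, |h k x| ∂ μ k := by
        simpa [Real.norm_eq_abs] using norm_integral_le_integral_norm (μ := μ k) (h k)
    _ ≤ ∫ x, (ε/3 + Set.indicator Kᶜ (fun _ => D) x) ∂ μ k :=
        integral_mono hint.abs hintr hmono
    _ = ε/3 + D * ((μ k) Kᶜ).toReal := by
        rw [integral_add (integrable_const _) ((integrable_const D).indicator hKm.compl),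
          integral_const, integral_indicator_const D hKm.compl]
        simp [measure_univ, mul_comm, Measure.real]
    _ ≤ ε/3 + D * (ε / (3 * (D+1))) := by
        have := hKt k
        nlinarith
    _ < ε := by
        have hde : (ε / (3 * (D+1))) * (3 * (D+1)) = ε := div_mul_cancel₀ _ (ne_of_gt hCpos)
        nlinarith [div_nonneg hε.le (le_of_lt hCpos)]

lemma convLip_prod {X Y : Type*}
    [MeasurableSpace X] [PseudoMetricSpace X] [OpensMeasurableSpace X]
    [ProperSpace X] [Nonempty X] [SecondCountableTopology X]
    [MeasurableSpace Y] [PseudoMetricSpace Y] [OpensMeasurableSpace Y]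
    [SecondCountableTopology Y]
    (μ : ℕ → Measure X) (ν : Measure X) (μ' : ℕ → Measure Y) (ν' : Measure Y)
    [∀ k, IsProbabilityMeasure (μ k)] [IsProbabilityMeasure ν]
    [∀ k, IsProbabilityMeasure (μ' k)] [IsProbabilityMeasure ν']
    (h1 : ConvLip μ ν) (h2 : ConvLip μ' ν') :
    ConvLip (fun k => (μ k).prod (μ' k)) (ν.prod ν') := by
  intro g L C hg hb
  -- slices
  have hgx : ∀ x : X, LipschitzWith L (fun y => g (x, y)) := fun x => by
    simpa [Function.comp_def] using hg.comp (LipschitzWith.prodMk_left x)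
  have hgxc : ∀ x : X, Continuous (fun y => g (x, y)) := fun x => (hgx x).continuous
  have hbx : ∀ x y, |g (x, y)| ≤ C := fun x y => hb (x, y)
  set f : X → ℝ := fun x => ∫ y, g (x, y) ∂ν' with hf
  set fk : ℕ → X → ℝ := fun k x => ∫ y, g (x, y) ∂(μ' k) with hfk
  have hintslice : ∀ (x : X) (ρ : Measure Y) [IsProbabilityMeasure ρ],
      Integrable (fun y => g (x, y)) ρ := fun x ρ _ =>
    integrable_of_bdd (hgxc x) (hbx x)
  have hfbd : ∀ x, |f x| ≤ C := by
    intro x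
    have := norm_integral_le_of_norm_le_const (μ := ν') (f := fun y => g (x, y)) (C := C)
      (Filter.Eventually.of_forall fun y => by simpa [Real.norm_eq_abs] using hbx x y)
    simpa [Real.norm_eq_abs, measure_univ] using this
  have hfkbd : ∀ k x, |fk k x| ≤ C := by
    intro k x
    have := norm_integral_le_of_norm_le_const (μ := μ' k) (f := fun y => g (x, y)) (C := C)
      (Filter.Eventually.of_forall fun y => by simpa [Real.norm_eq_abs] using hbx x y)
    simpa [Real.norm_eq_abs, measure_univ] using this
  -- Lipschitz of partial integrals
  have hlip : ∀ (ρ : Measure Y) [IsProbabilityMeasure ρ],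
      LipschitzWith L (fun x => ∫ y, g (x, y) ∂ρ) := by
    intro ρ _
    apply LipschitzWith.of_dist_le_mul
    intro x x'
    rw [Real.dist_eq, ← integral_sub (hintslice x ρ) (hintslice x' ρ)]
    have hptbd : ∀ y, ‖g (x, y) - g (x', y)‖ ≤ (L:ℝ) * dist x x' := by
      intro y
      rw [Real.norm_eq_abs, ← Real.dist_eq]
      calc dist (g (x, y)) (g (x', y)) ≤ (L:ℝ) * dist (x, y) (x', y) := hg.dist_le_mul _ _
        _ = (L:ℝ) * dist x x' := by
            rw [Prod.dist_eq]; simp [dist_nonneg]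
    have := norm_integral_le_of_norm_le_const (μ := ρ)
      (f := fun y => g (x, y) - g (x', y)) (C := (L:ℝ) * dist x x')
      (Filter.Eventually.of_forall hptbd)
    rw [Real.norm_eq_abs] at this
    simpa [measure_univ] using this
  have hflip : LipschitzWith L f := hlip ν'
  have hfklip : ∀ k, LipschitzWith L (fk k) := fun k => hlip (μ' k)
  -- pointwise convergence fk → f
  have hpt : ∀ x, Tendsto (fun k => fk k x - f x) atTop (nhds 0) := by
    intro x
    have := (h2 (fun y => g (x, y)) L C (hgx x) (hbx x)).sub_const (f x)
    simpa [hf, hfk] using this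
  -- difference h k
  have hdlip : ∀ k, LipschitzWith (L + L) (fun x => fk k x - f x) := fun k =>
    LipschitzWith.sub (hfklip k) hflip
  have hdbd : ∀ k x, |fk k x - f x| ≤ C + C := fun k x =>
    le_trans (abs_sub _ _) (add_le_add (hfkbd k x) (hfbd x))
  have hzero : Tendsto (fun k => ∫ x, (fk k x - f x) ∂(μ k)) atTop (nhds 0) :=
    tendsto_integral_zero μ (fun ε hε => tight μ ν h1 hε) hdlip hdbd hpt
  have hfconv : Tendsto (fun k => ∫ x, f x ∂(μ k)) atTop (nhds (∫ x, f x ∂ν)) :=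
    h1 f L C hflip hfbd
  -- Fubini
  have hgint : ∀ (ρ : Measure X) (ρ' : Measure Y) [IsProbabilityMeasure ρ]
      [IsProbabilityMeasure ρ'], Integrable g (ρ.prod ρ') := fun ρ ρ' _ _ =>
    integrable_of_bdd hg.continuous hb
  have hfub : ∀ (ρ : Measure X) (ρ' : Measure Y) [IsProbabilityMeasure ρ]
      [IsProbabilityMeasure ρ'], ∫ z, g z ∂(ρ.prod ρ') = ∫ x, ∫ y, g (x, y) ∂ρ' ∂ρ :=
    fun ρ ρ' _ _ => integral_prod g (hgint ρ ρ')
  have hfint : ∀ (ρ : Measure X) [IsProbabilityMeasure ρ], Integrable f ρ := fun ρ _ =>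
    integrable_of_bdd hflip.continuous hfbd
  have hfkint : ∀ k, Integrable (fk k) (μ k) := fun k =>
    integrable_of_bdd (hfklip k).continuous (hfkbd k)
  have heq : ∀ k, ∫ z, g z ∂((μ k).prod (μ' k))
      = (∫ x, (fk k x - f x) ∂(μ k)) + ∫ x, f x ∂(μ k) := by
    intro k
    rw [hfub (μ k) (μ' k), integral_sub (hfkint k) (hfint (μ k))]
    ring
  have : Tendsto (fun k => (∫ x, (fk k x - f x) ∂(μ k)) + ∫ x, f x ∂(μ k)) atTop
      (nhds (0 + ∫ x, f x ∂ν)) := hzero.add hfconv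
  rw [zero_add] at this
  rw [hfub ν ν']
  exact Tendsto.congr (fun k => (heq k).symm) this

lemma convLip_pi {E : Type*} [MeasurableSpace E] [PseudoMetricSpace E] [BorelSpace E]
    [ProperSpace E] [Nonempty E] [SecondCountableTopology E]
    (μ : ℕ → Measure E) (ν : Measure E) [∀ k, IsProbabilityMeasure (μ k)]
    [IsProbabilityMeasure ν] (h : ConvLip μ ν) :
    ∀ n : ℕ, ConvLip (fun k => Measure.pi (fun _ : Fin n => μ k))
      (Measure.pi (fun _ : Fin n => ν)) := by
  intro n
  induction n with
  | zero =>
    intro g L C hg hb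
    have hgc : g = fun _ => g default := funext fun z => by rw [Subsingleton.elim z default]
    rw [hgc]
    simp only [integral_const, Measure.real, measure_univ, ENNReal.toReal_one, one_smul]
    exact tendsto_const_nhds
  | succ n ih =>
    intro g L C hg hb
    set e := MeasurableEquiv.piFinSuccAbove (fun _ : Fin (n+1) => E) 0 with he
    -- symm is 1-Lipschitz
    have hsymm : LipschitzWith 1 (⇑e.symm) := by
      apply LipschitzWith.of_dist_le_mul
      intro p q
      rw [NNReal.coe_one, one_mul]
      rw [dist_pi_le_iff dist_nonneg]
      intro i
      induction i using Fin.cases with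
      | zero =>
        have h0p : e.symm p 0 = p.1 := rfl
        have h0q : e.symm q 0 = q.1 := rfl
        rw [h0p, h0q, Prod.dist_eq]
        exact le_max_left _ _
      | succ j =>
        have hjp : e.symm p j.succ = p.2 j := by simp [he, MeasurableEquiv.piFinSuccAbove]
        have hjq : e.symm q j.succ = q.2 j := by simp [he, MeasurableEquiv.piFinSuccAbove]
        rw [hjp, hjq, Prod.dist_eq]
        exact le_trans (dist_le_pi_dist p.2 q.2 j) (le_max_right _ _)
    have hgel : LipschitzWith L (g ∘ ⇑e.symm) := by simpa using hg.comp hsymm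
    have hgeb : ∀ w, |(g ∘ ⇑e.symm) w| ≤ C := fun w => hb _
    -- change of variables
    have hcv : ∀ (ρ : Measure E) [IsProbabilityMeasure ρ],
        ∫ z, g z ∂(Measure.pi (fun _ : Fin (n+1) => ρ))
          = ∫ w, (g ∘ ⇑e.symm) w ∂(ρ.prod (Measure.pi (fun _ : Fin n => ρ))) := by
      intro ρ _
      have hmp := measurePreserving_piFinSuccAbove (fun _ : Fin (n+1) => ρ) 0
      have := hmp.integral_comp e.measurableEmbedding (g ∘ ⇑e.symm)
      rw [← this]
      congr 1
      funext x
      exact congrArg g (e.symm_apply_apply x).symm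
    have hconv := convLip_prod μ ν (fun k => Measure.pi (fun _ : Fin n => μ k))
      (Measure.pi (fun _ : Fin n => ν)) h ih (g ∘ ⇑e.symm) L C hgel hgeb
    have hgoal := hconv
    rw [← hcv ν] at hgoal
    refine Tendsto.congr (fun k => ?_) hgoal
    rw [← hcv (μ k)]

lemma le_measure_closure {X : Type*} [MeasurableSpace X] [PseudoMetricSpace X]
    [OpensMeasurableSpace X]
    (μ : ℕ → Measure X) (ν : Measure X) [∀ k, IsProbabilityMeasure (μ k)]
    [IsProbabilityMeasure ν] (h : ConvLip μ ν) (A : Set X) {c : ℝ}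
    (hc : ∀ k, c ≤ ((μ k) A).toReal) : c ≤ (ν (closure A)).toReal := by
  set F := closure A with hF
  have hFc : IsClosed F := isClosed_closure
  rcases F.eq_empty_or_nonempty with hne | hne
  · have hA : A = ∅ := Set.subset_eq_empty (hne ▸ subset_closure) rfl
    have := hc 0
    rw [hA] at this
    simp only [measure_empty, ENNReal.toReal_zero] at this
    exact le_trans this ENNReal.toReal_nonneg
  -- test functions
  set gj : ℕ → X → ℝ := fun j x => max (1 - (j+1) * infDist x F) 0 with hgj
  have hlip : ∀ j : ℕ, LipschitzWith ((j:NNReal)+1) (gj j) := by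
    intro j
    have h1 : LipschitzWith ((j:NNReal)+1) (fun x : X => 1 - (j+1) * infDist x F) := by
      apply LipschitzWith.of_dist_le_mul
      intro x y
      rw [Real.dist_eq]
      have hd := (lipschitz_infDist_pt F).dist_le_mul x y
      rw [NNReal.coe_one, one_mul, Real.dist_eq] at hd
      have : (1 - ((j:ℝ)+1) * infDist x F) - (1 - ((j:ℝ)+1) * infDist y F)
          = -(((j:ℝ)+1) * (infDist x F - infDist y F)) := by ring
      rw [this, abs_neg, abs_mul, abs_of_nonneg (by positivity : (0:ℝ) ≤ (j:ℝ)+1)]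
      have hcast : ((((j:NNReal)+1) : NNReal) : ℝ) = (j:ℝ)+1 := by push_cast; ring
      rw [hcast]
      exact mul_le_mul_of_nonneg_left hd (by positivity)
    have := lipMaxZero.comp h1
    simpa [hgj, Function.comp_def] using this
  have hgb : ∀ j x, |gj j x| ≤ 1 := by
    intro j x
    rw [abs_le]
    constructor
    · linarith [le_max_right (1 - ((j:ℝ)+1) * infDist x F) 0]
    · apply max_le _ zero_le_one
      have : 0 ≤ ((j:ℝ)+1) * infDist x F := mul_nonneg (by positivity) infDist_nonneg
      linarith
  have hgnn : ∀ j x, 0 ≤ gj j x := fun j x => le_max_right _ _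
  have hind : ∀ j x, Set.indicator F (fun _ => (1:ℝ)) x ≤ gj j x := by
    intro j x
    by_cases hx : x ∈ F
    · rw [Set.indicator_of_mem hx]
      have : infDist x F = 0 := infDist_zero_of_mem hx
      simp [hgj, this]
    · rw [Set.indicator_of_notMem hx]; exact hgnn j x
  -- step 1: c ≤ ∫ gj dν for every j
  have hstep1 : ∀ j : ℕ, c ≤ ∫ x, gj j x ∂ν := by
    intro j
    have hck : ∀ k, c ≤ ∫ x, gj j x ∂(μ k) := by
      intro k
      have h1 : ((μ k) A).toReal ≤ ((μ k) F).toReal :=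
        ENNReal.toReal_mono (measure_ne_top _ _) (measure_mono subset_closure)
      have h2 : ((μ k) F).toReal = ∫ x, Set.indicator F (fun _ => (1:ℝ)) x ∂(μ k) := by
        rw [integral_indicator_const (1:ℝ) hFc.measurableSet]; simp [Measure.real]
      have h3 : ∫ x, Set.indicator F (fun _ => (1:ℝ)) x ∂(μ k) ≤ ∫ x, gj j x ∂(μ k) :=
        integral_mono ((integrable_const 1).indicator hFc.measurableSet)
          (integrable_of_bdd (hlip j).continuous (hgb j)) (hind j)
      linarith [hc k]
    exact ge_of_tendsto (h (gj j) _ 1 (hlip j) (hgb j)) (Filter.Eventually.of_forall hck)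
  -- step 2: ∫ gj dν → (ν F).toReal
  have hptw : ∀ x, Tendsto (fun j => gj j x) atTop (nhds (Set.indicator F (fun _ => (1:ℝ)) x)) := by
    intro x
    by_cases hx : x ∈ F
    · have : ∀ j, gj j x = 1 := by
        intro j
        have : infDist x F = 0 := infDist_zero_of_mem hx
        simp [hgj, this]
      rw [Set.indicator_of_mem hx]
      simpa [this] using tendsto_const_nhds (x := (1:ℝ)) (f := atTop (α := ℕ))
    · have hd : 0 < infDist x F := by
        rw [← hFc.notMem_iff_infDist_pos hne]
        exact hx
      rw [Set.indicator_of_notMem hx]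
      obtain ⟨J, hJ⟩ := exists_nat_ge (1 / infDist x F)
      have hev : ∀ j ≥ J, gj j x = 0 := by
        intro j hj
        have h1 : 1 / infDist x F ≤ (j:ℝ) := le_trans hJ (by exact_mod_cast hj)
        have h2 : 1 ≤ (j:ℝ) * infDist x F := by
          rw [div_le_iff₀ hd] at h1
          linarith
        have h3 : 1 - ((j:ℝ)+1) * infDist x F ≤ 0 := by nlinarith
        exact max_eq_right h3
      apply tendsto_const_nhds.congr'
      filter_upwards [eventually_ge_atTop J] with j hj
      exact (hev j hj).symm
  have hdct : Tendsto (fun j => ∫ x, gj j x ∂ν) atTop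
      (nhds (∫ x, Set.indicator F (fun _ => (1:ℝ)) x ∂ν)) := by
    apply tendsto_integral_of_dominated_convergence (fun _ => (1:ℝ))
    · exact fun j => ((hlip j).continuous).aestronglyMeasurable
    · exact integrable_const 1
    · exact fun j => Filter.Eventually.of_forall fun x => by
        rw [Real.norm_eq_abs]; exact hgb j x
    · exact Filter.Eventually.of_forall hptw
  have hFval : ∫ x, Set.indicator F (fun _ => (1:ℝ)) x ∂ν = (ν F).toReal := by
    rw [integral_indicator_const (1:ℝ) hFc.measurableSet]; simp [Measure.real]
  rw [hFval] at hdct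
  exact ge_of_tendsto hdct (Filter.Eventually.of_forall hstep1)

lemma frontier_subset_discont {X : Type*} [TopologicalSpace X] (φ : X → ℝ)
    (h01 : ∀ z, φ z = 0 ∨ φ z = 1) :
    frontier {z | φ z = 0} ⊆ {z | ¬ ContinuousAt φ z} := by
  intro z hz
  intro hcont
  have hev : ∀ᶠ w in nhds z, |φ w - φ z| < 1/2 := by
    have := hcont (Metric.ball_mem_nhds (φ z) (by norm_num : (0:ℝ) < 1/2))
    filter_upwards [this] with w hw
    have := mem_ball.1 hw
    rwa [Real.dist_eq] at this
  rcases h01 z with h0 | h1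
  · have hmem : {z | φ z = 0} ∈ nhds z := by
      filter_upwards [hev] with w hw
      rcases h01 w with hw0 | hw1
      · exact hw0
      · rw [hw1, h0] at hw; norm_num at hw
    exact hz.2 (mem_interior_iff_mem_nhds.2 hmem)
  · have hmem : {z | φ z = 0}ᶜ ∈ nhds z := by
      filter_upwards [hev] with w hw
      rcases h01 w with hw0 | hw1
      · rw [hw0, h1] at hw; norm_num at hw
      · simp [Set.mem_compl_iff, hw1]
    have : z ∈ interior ({z | φ z = 0}ᶜ) := mem_interior_iff_mem_nhds.2 hmem
    rw [interior_compl] at this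
    exact this hz.1

end CSU

instance sampleDist_prob (n : ℕ) {E : Type*} [MeasurableSpace E] (P : ProbabilityMeasure E) :
    IsProbabilityMeasure (sampleDist n P) := by
  unfold sampleDist; infer_instance

/-- Theorem 2, second part: if in addition `1 − α > 0` and `μ(𝔓)` is
unbounded, then under every `P ∈ 𝔓` the confidence set is unbounded with strictly positive
probability. -/
theorem confidence_set_unbounded_with_positive_probability (l n : ℕ) (hl : 1 ≤ l) (hn : 1 ≤ n)
    (𝔓 : Set (ProbabilityMeasure (Fin l → ℝ)))
    (μ : ProbabilityMeasure (Fin l → ℝ) → ℝ)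
    (φ : ℝ → (Fin n → Fin l → ℝ) → ℝ)
    (hφ : ∀ m, Measurable (φ m) ∧ ∀ z, φ m z = 0 ∨ φ m z = 1)
    (hindist : ∀ m ∈ μ '' 𝔓, ∀ Q ∈ 𝔓, μ Q ≠ m →
      ∃ P : ℕ → ProbabilityMeasure (Fin l → ℝ), (∀ k, P k ∈ 𝔓 ∧ μ (P k) = m) ∧
        ConvDM (fun k => (P k : Measure (Fin l → ℝ))) (Q : Measure (Fin l → ℝ)))
    (hcont : ∀ m ∈ μ '' 𝔓, ∀ Q ∈ 𝔓, μ Q ≠ m → ASCont n Q (φ m))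
    (α : ℝ)
    (hconf : sInf ((fun P => (sampleDist n P {z | μ P ∈ μ '' 𝔓 ∧ φ (μ P) z = 0}).toReal) '' 𝔓)
      = 1 - α)
    (hα : 0 < 1 - α)
    (hunb : ¬ Bornology.IsBounded (μ '' 𝔓)) :
    ∀ P ∈ 𝔓,
      0 < sampleDist n P {z | ¬ Bornology.IsBounded {m | m ∈ μ '' 𝔓 ∧ φ m z = 0}} := by
  intro P hP
  classical
  set c : ℝ := 1 - α with hcdef
  have hbdd : BddBelow ((fun P => (sampleDist n P
      {z | μ P ∈ μ '' 𝔓 ∧ φ (μ P) z = 0}).toReal) '' 𝔓) := by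
    refine ⟨0, ?_⟩
    rintro x ⟨P', _, rfl⟩
    exact ENNReal.toReal_nonneg
  have hlow : ∀ Q ∈ 𝔓, c ≤ (sampleDist n Q {z | μ Q ∈ μ '' 𝔓 ∧ φ (μ Q) z = 0}).toReal := by
    intro Q hQ
    rw [← hconf]
    exact csInf_le hbdd ⟨Q, hQ, rfl⟩
  have hsetQ : ∀ (Q : ProbabilityMeasure (Fin l → ℝ)) (m : ℝ), μ Q = m → m ∈ μ '' 𝔓 →
      {z | μ Q ∈ μ '' 𝔓 ∧ φ (μ Q) z = 0} = {z | φ m z = 0} := by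
    intro Q m hQm hm
    ext z
    simp [hQm, hm]
  have key : ∀ m ∈ μ '' 𝔓, c ≤ (sampleDist n P {z | φ m z = 0}).toReal := by
    intro m hm
    by_cases hPm : μ P = m
    · have := hlow P hP
      rwa [hsetQ P m hPm hm] at this
    · obtain ⟨Pk, hPk, hconv⟩ := hindist m hm P hP hPm
      have hk : ∀ k, c ≤ ((sampleDist n (Pk k)) {z | φ m z = 0}).toReal := by
        intro k
        have := hlow (Pk k) (hPk k).1
        rwa [hsetQ (Pk k) m (hPk k).2 hm] at this
      have hCL : CSU.ConvLip (fun k => ((Pk k : Measure (Fin l → ℝ))))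
          (P : Measure (Fin l → ℝ)) :=
        fun g L C hg hb => hconv g hg.continuous ⟨C, hb⟩
      have hCLn := CSU.convLip_pi _ _ hCL n
      have hclos : c ≤ ((Measure.pi (fun _ : Fin n => (P : Measure (Fin l → ℝ))))
          (closure {z | φ m z = 0})).toReal :=
        CSU.le_measure_closure _ _ hCLn {z | φ m z = 0} hk
      have hAS := hcont m hm P hP hPm
      have hfr : sampleDist n P (frontier {z | φ m z = 0}) = 0 :=
        measure_mono_null (CSU.frontier_subset_discont (φ m) (hφ m).2) hAS
      have hcl : sampleDist n P (closure {z | φ m z = 0})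
          ≤ sampleDist n P {z | φ m z = 0} := by
        calc sampleDist n P (closure {z | φ m z = 0})
            ≤ sampleDist n P ({z | φ m z = 0} ∪ frontier {z | φ m z = 0}) := by
              apply measure_mono
              intro x hx
              by_cases hxi : x ∈ interior {z | φ m z = 0}
              · exact Or.inl (interior_subset hxi)
              · exact Or.inr ⟨hx, hxi⟩
          _ ≤ sampleDist n P {z | φ m z = 0} + sampleDist n P (frontier {z | φ m z = 0}) :=
              measure_union_le _ _
          _ = sampleDist n P {z | φ m z = 0} := by rw [hfr, add_zero]
      have h2 := ENNReal.toReal_mono (measure_ne_top _ _) hcl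
      exact le_trans hclos h2
  -- choose unbounded sequence of parameter values
  have hms : ∀ j : ℕ, ∃ m, m ∈ μ '' 𝔓 ∧ (j:ℝ) < |m| := by
    intro j
    by_contra hcon
    push_neg at hcon
    exact hunb (isBounded_iff_forall_norm_le.2 ⟨j, fun m hm => by
      simpa [Real.norm_eq_abs] using hcon m hm⟩)
  choose ms hms1 hms2 using hms
  set B : ℕ → Set (Fin n → Fin l → ℝ) := fun j => {z | φ (ms j) z = 0} with hB
  have hBmeas : ∀ j, MeasurableSet (B j) := by
    intro j
    have : B j = φ (ms j) ⁻¹' {0} := by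
      ext z; simp [hB]
    rw [this]
    exact (hφ (ms j)).1 (measurableSet_singleton 0)
  have hBc : ∀ j, ENNReal.ofReal c ≤ sampleDist n P (B j) := fun j =>
    (ENNReal.ofReal_le_iff_le_toReal (measure_ne_top _ _)).2 (key (ms j) (hms1 j))
  set U : ℕ → Set (Fin n → Fin l → ℝ) := fun N => ⋃ j, ⋃ (_ : N ≤ j), B j with hU
  have hUm : ∀ N, MeasurableSet (U N) := fun N =>
    MeasurableSet.iUnion fun j => MeasurableSet.iUnion fun _ => hBmeas j
  have hUanti : Antitone U := by
    intro N N' hNN'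
    apply Set.iUnion₂_subset
    intro j hj
    exact Set.subset_iUnion₂ (s := fun j (_ : N ≤ j) => B j) j (le_trans hNN' hj)
  have hUc : ∀ N, ENNReal.ofReal c ≤ sampleDist n P (U N) := fun N =>
    le_trans (hBc N) (measure_mono (Set.subset_iUnion₂ (s := fun j (_ : N ≤ j) => B j) N le_rfl))
  have hInt : sampleDist n P (⋂ N, U N) = ⨅ N, sampleDist n P (U N) :=
    (hUanti.directed_ge).measure_iInter (fun N => (hUm N).nullMeasurableSet)
      ⟨0, measure_ne_top _ _⟩
  have hLc : ENNReal.ofReal c ≤ sampleDist n P (⋂ N, U N) := by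
    rw [hInt]
    exact le_iInf hUc
  have hsub : (⋂ N, U N) ⊆
      {z | ¬ Bornology.IsBounded {m | m ∈ μ '' 𝔓 ∧ φ m z = 0}} := by
    intro z hz hbdz
    obtain ⟨R, hR⟩ := isBounded_iff_forall_norm_le.1 hbdz
    obtain ⟨N, hN⟩ := exists_nat_gt R
    have hzN := Set.mem_iInter.1 hz N
    obtain ⟨j, hNj, hzB⟩ := Set.mem_iUnion₂.1 hzN
    have hmem : ms j ∈ {m | m ∈ μ '' 𝔓 ∧ φ m z = 0} := ⟨hms1 j, hzB⟩
    have h1 : |ms j| ≤ R := by simpa [Real.norm_eq_abs] using hR (ms j) hmem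
    have h2 : (j:ℝ) < |ms j| := hms2 j
    have h3 : (N:ℝ) ≤ (j:ℝ) := by exact_mod_cast hNj
    linarith
  calc (0:ENNReal) < ENNReal.ofReal c := ENNReal.ofReal_pos.2 hα
    _ ≤ sampleDist n P (⋂ N, U N) := hLc
    _ ≤ sampleDist n P {z | ¬ Bornology.IsBounded {m | m ∈ μ '' 𝔓 ∧ φ m z = 0}} :=
        measure_mono hsub
end

section
/- Every Borel probability measure Q on ℝ^l is the limit in distribution of a sequence of finitely supported (hence discrete) probability measures. Consequently, for the problem of testing the null hypothesis that the distribution of the data is discrete against the alternative that it is absolutely continuous with respect to Lebesgue measure, the set of alternative distributions is indistinguishable from the set of null distributions in the weak distance, and every test that is a.s. continuous under each absolutely continuous alternative has power limited by size. -/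
open MeasureTheory Filter

/-- A discrete distribution: one supported on a countable set. -/
def IsDiscreteDist {E : Type*} [MeasurableSpace E] (P : Measure E) : Prop :=
  ∃ s : Set E, s.Countable ∧ P sᶜ = 0


/-- Discretization map: clamp to `[-k,k]` and round down to the grid `2^{-k}ℤ`. -/
noncomputable def disc (l k : ℕ) (x : Fin l → ℝ) : Fin l → ℝ :=
  fun i => (⌊(2^k : ℝ) * (max (-(k:ℝ)) (min (k:ℝ) (x i)))⌋ : ℝ) / 2^k

lemma disc_measurable (l k : ℕ) : Measurable (disc l k) := by
  apply measurable_pi_lambda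
  intro i
  apply Measurable.div_const
  exact measurable_from_top.comp (Measurable.floor
    ((measurable_const.max (measurable_const.min (measurable_pi_apply i))).const_mul _))

/-- The finite grid containing the image of `disc l k`. -/
noncomputable def gridFin (l k : ℕ) : Finset (Fin l → ℝ) :=
  Fintype.piFinset fun _ => (Finset.Icc (-(k * 2^k : ℤ)) (k * 2^k)).image fun m : ℤ => (m : ℝ) / 2^k

lemma disc_mem (l k : ℕ) (x : Fin l → ℝ) : disc l k x ∈ gridFin l k := by
  rw [gridFin, Fintype.mem_piFinset]
  intro i
  rw [Finset.mem_image]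
  refine ⟨⌊(2^k : ℝ) * (max (-(k:ℝ)) (min (k:ℝ) (x i)))⌋, ?_, rfl⟩
  rw [Finset.mem_Icc]
  have hp : (0:ℝ) < 2^k := by positivity
  have h1 : -(k:ℝ) ≤ max (-(k:ℝ)) (min (k:ℝ) (x i)) := le_max_left _ _
  have h2 : max (-(k:ℝ)) (min (k:ℝ) (x i)) ≤ (k:ℝ) := by
    apply max_le (by linarith [Nat.cast_nonneg (α := ℝ) k]) (min_le_left _ _)
  constructor
  · rw [Int.le_floor]
    push_cast
    nlinarith
  · have : (⌊(2^k : ℝ) * (max (-(k:ℝ)) (min (k:ℝ) (x i)))⌋ : ℤ) ≤ ⌊((k * 2^k : ℤ) : ℝ)⌋ := by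
      apply Int.floor_le_floor
      push_cast
      nlinarith
    rwa [Int.floor_intCast] at this

lemma disc_tendsto (l : ℕ) (x : Fin l → ℝ) :
    Tendsto (fun k => disc l k x) atTop (nhds x) := by
  rw [tendsto_pi_nhds]
  intro i
  set a := x i with ha
  rw [tendsto_iff_dist_tendsto_zero]
  simp only [Real.dist_eq]
  apply squeeze_zero' (g := fun k => (1/2 : ℝ)^k)
  · filter_upwards with k using abs_nonneg _
  · filter_upwards [eventually_ge_atTop ⌈|a|⌉₊] with k hk
    have hka : |a| ≤ (k:ℝ) := le_trans (Nat.le_ceil _) (by exact_mod_cast hk)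
    have hclamp : max (-(k:ℝ)) (min (k:ℝ) a) = a := by
      rw [min_eq_right (le_trans (le_abs_self a) hka),
        max_eq_right (by linarith [neg_abs_le a])]
    have hp : (0:ℝ) < 2^k := by positivity
    have h1 : (⌊(2^k : ℝ) * a⌋ : ℝ) ≤ 2^k * a := Int.floor_le _
    have h2 : 2^k * a - 1 < (⌊(2^k : ℝ) * a⌋ : ℝ) := Int.sub_one_lt_floor _
    have heq : (⌊(2^k : ℝ) * a⌋ : ℝ) / 2^k - a = ((⌊(2^k : ℝ) * a⌋ : ℝ) - 2^k * a) / 2^k := by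
      field_simp
    rw [disc, hclamp, heq, abs_div, abs_of_pos hp, div_pow, one_pow]
    gcongr
    rw [abs_le]; constructor <;> linarith
  · exact tendsto_pow_atTop_nhds_zero_of_lt_one (by norm_num) (by norm_num)

lemma key (l : ℕ) (Q : ProbabilityMeasure (Fin l → ℝ)) (φ : (Fin l → ℝ) → ℝ)
    (hφm : Measurable φ) (C : ℝ) (hC : ∀ x, |φ x| ≤ C)
    (hae : ∀ᵐ x ∂(Q : Measure (Fin l → ℝ)), ContinuousAt φ x) :
    Tendsto (fun k => ∫ x, φ x ∂((Q : Measure (Fin l → ℝ)).map (disc l k))) atTop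
      (nhds (∫ x, φ x ∂(Q : Measure (Fin l → ℝ)))) := by
  have hmap : ∀ k, ∫ x, φ x ∂((Q : Measure (Fin l → ℝ)).map (disc l k))
      = ∫ x, φ (disc l k x) ∂(Q : Measure (Fin l → ℝ)) :=
    fun k => integral_map (disc_measurable l k).aemeasurable hφm.aestronglyMeasurable
  simp only [hmap]
  apply tendsto_integral_of_dominated_convergence (bound := fun _ => C)
  · intro n; exact (hφm.comp (disc_measurable l n)).aestronglyMeasurable
  · exact integrable_const C
  · intro n; filter_upwards with y; simpa [Real.norm_eq_abs] using hC (disc l n y)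
  · filter_upwards [hae] with y hy
    exact Filter.Tendsto.comp hy (disc_tendsto l y)

/-- Pushforward vanishes off the grid. -/
lemma map_grid_compl (l k : ℕ) (Q : ProbabilityMeasure (Fin l → ℝ)) :
    (Q : Measure (Fin l → ℝ)).map (disc l k) (↑(gridFin l k))ᶜ = 0 := by
  rw [Measure.map_apply (disc_measurable l k)
    (gridFin l k).measurableSet.compl]
  have : disc l k ⁻¹' (↑(gridFin l k))ᶜ = ∅ := by
    ext x; simp [disc_mem]
  simp [this]

lemma integral_test_le_one {μ : Measure (Fin l → ℝ)} [IsProbabilityMeasure μ]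
    (φ : (Fin l → ℝ) → ℝ) (hφ : IsTest φ) : ∫ x, φ x ∂μ ≤ 1 := by
  have h := integral_mono_of_nonneg (μ := μ) (f := φ) (g := fun _ => (1:ℝ))
    (Eventually.of_forall fun x => (hφ.2 x).1) (integrable_const 1)
    (Eventually.of_forall fun x => (hφ.2 x).2)
  simpa using h

/-- every Borel probability measure on `ℝ^l` is the limit in distribution
of finitely supported probability measures; hence the absolutely continuous alternatives are
indistinguishable in the weak distance from the discrete null distributions, and every test
a.s. continuous under each absolutely continuous alternative has power limited by size. -/
theorem discrete_vs_continuous_impossible (l : ℕ) (hl : 1 ≤ l) :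
    (∀ Q : ProbabilityMeasure (Fin l → ℝ), ∃ P : ℕ → ProbabilityMeasure (Fin l → ℝ),
      (∀ k, ∃ s : Finset (Fin l → ℝ), (P k : Measure (Fin l → ℝ)) (↑s)ᶜ = 0) ∧
      ConvDM (fun k => (P k : Measure (Fin l → ℝ))) (Q : Measure (Fin l → ℝ))) ∧
    (∀ Q : ProbabilityMeasure (Fin l → ℝ),
      (Q : Measure (Fin l → ℝ)) ≪ MeasureTheory.volume →
      ∃ P : ℕ → ProbabilityMeasure (Fin l → ℝ),
        (∀ k, IsDiscreteDist (P k : Measure (Fin l → ℝ))) ∧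
        ConvDM (fun k => (P k : Measure (Fin l → ℝ))) (Q : Measure (Fin l → ℝ))) ∧
    (∀ φ : (Fin l → ℝ) → ℝ, IsTest φ →
      (∀ Q : ProbabilityMeasure (Fin l → ℝ), (Q : Measure (Fin l → ℝ)) ≪ MeasureTheory.volume →
        (Q : Measure (Fin l → ℝ)) {x | ¬ ContinuousAt φ x} = 0) →
      sSup ((fun Q : ProbabilityMeasure (Fin l → ℝ) => ∫ x, φ x ∂(Q : Measure (Fin l → ℝ))) ''
          {Q : ProbabilityMeasure (Fin l → ℝ) | (Q : Measure (Fin l → ℝ)) ≪ MeasureTheory.volume}) ≤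
      sSup ((fun P : ProbabilityMeasure (Fin l → ℝ) => ∫ x, φ x ∂(P : Measure (Fin l → ℝ))) ''
          {P : ProbabilityMeasure (Fin l → ℝ) | IsDiscreteDist (P : Measure (Fin l → ℝ))})) := by
  have hpart1 : ∀ Q : ProbabilityMeasure (Fin l → ℝ),
      ∃ P : ℕ → ProbabilityMeasure (Fin l → ℝ),
      (∀ k, ∃ s : Finset (Fin l → ℝ), (P k : Measure (Fin l → ℝ)) (↑s)ᶜ = 0) ∧
      ConvDM (fun k => (P k : Measure (Fin l → ℝ))) (Q : Measure (Fin l → ℝ)) := by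
    intro Q
    refine ⟨fun k => Q.map (disc_measurable l k).aemeasurable, ?_, ?_⟩
    · intro k
      exact ⟨gridFin l k, by
        rw [ProbabilityMeasure.toMeasure_map]; exact map_grid_compl l k Q⟩
    · intro g hg hgb
      obtain ⟨C, hC⟩ := hgb
      have := key l Q g hg.measurable C hC
        (Eventually.of_forall fun x => hg.continuousAt)
      simpa only [ProbabilityMeasure.toMeasure_map] using this
  refine ⟨hpart1, ?_, ?_⟩
  · intro Q _
    obtain ⟨P, hP1, hP2⟩ := hpart1 Q
    refine ⟨P, fun k => ?_, hP2⟩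
    obtain ⟨s, hs⟩ := hP1 k
    exact ⟨↑s, s.countable_toSet, hs⟩
  · intro φ hφ hcont
    set Snull := ((fun P : ProbabilityMeasure (Fin l → ℝ) =>
        ∫ x, φ x ∂(P : Measure (Fin l → ℝ))) ''
        {P : ProbabilityMeasure (Fin l → ℝ) | IsDiscreteDist (P : Measure (Fin l → ℝ))}) with hSnull
    have hbdd : BddAbove Snull := by
      refine ⟨1, ?_⟩
      rintro r ⟨P, _, rfl⟩
      exact integral_test_le_one φ hφ
    have hC : ∀ x, |φ x| ≤ 1 := fun x =>
      abs_le.mpr ⟨by linarith [(hφ.2 x).1], (hφ.2 x).2⟩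
    -- the Dirac measure at 0 is a discrete null distribution
    have hnonneg : 0 ≤ sSup Snull := by
      set δ : ProbabilityMeasure (Fin l → ℝ) :=
        ⟨Measure.dirac 0, Measure.dirac.isProbabilityMeasure⟩ with hδ
      have hmem : (∫ x, φ x ∂(δ : Measure (Fin l → ℝ))) ∈ Snull := by
        refine ⟨δ, ⟨{0}, Set.countable_singleton 0, ?_⟩, rfl⟩
        simp [hδ, Measure.dirac_apply' _ (measurableSet_singleton (0 : Fin l → ℝ)).compl]
      have hval : 0 ≤ ∫ x, φ x ∂(δ : Measure (Fin l → ℝ)) := by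
        have hcoe : (δ : Measure (Fin l → ℝ)) = Measure.dirac 0 := rfl
        rw [hcoe, integral_dirac]
        exact (hφ.2 0).1
      exact le_trans hval (le_csSup hbdd hmem)
    apply Real.sSup_le _ hnonneg
    rintro r ⟨Q, hQ, rfl⟩
    have hae : ∀ᵐ x ∂(Q : Measure (Fin l → ℝ)), ContinuousAt φ x := by
      rw [ae_iff]; exact hcont Q hQ
    have hk := key l Q φ hφ.1 1 hC hae
    apply le_of_tendsto hk
    filter_upwards with k
    have hmem : (∫ x, φ x ∂((Q : Measure (Fin l → ℝ)).map (disc l k))) ∈ Snull := by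
      refine ⟨Q.map (disc_measurable l k).aemeasurable, ?_, ?_⟩
      · refine ⟨↑(gridFin l k), (gridFin l k).countable_toSet, ?_⟩
        rw [ProbabilityMeasure.toMeasure_map]; exact map_grid_compl l k Q
      · exact congrArg (fun μ => ∫ x, φ x ∂μ)
          (ProbabilityMeasure.toMeasure_map Q (disc_measurable l k).aemeasurable)
    exact le_csSup hbdd hmem
end

section
/- (Regression Discontinuity Design, indistinguishability.) For every m ∈ ℝ, 𝒫₁(m) is indistinguishable from 𝒫₀(m) in the weak distance: for every Q ∈ 𝒫 with μ(Q) ≠ m there exists a sequence {P_k} in 𝒫 with μ(P_k) = m for all k and P_k →d Q. Explicitly, one may take P_k to have the same marginal distribution of X as Q, the same conditional distribution of (Y,X) given X ∉ [c−1/k, c) as Q, and conditional mean g_k(x) = E_Q[Y|X=x] + 1{c−1/k ≤ x < c}·k·(μ(Q) − m)·(x − c + 1/k), which satisfies g_k ∈ 𝒢 and has jump m at c. -/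
open MeasureTheory Filter Set

/-- Membership in the class `𝒢`: `g` is bounded, continuous at every `x ≠ c`, with finite
one-sided limits `gp = g(c+)` and `gm = g(c−)` at the cutoff `c`. -/
def JumpFun (c : ℝ) (g : ℝ → ℝ) (gp gm : ℝ) : Prop :=
  (∃ C, ∀ x, |g x| ≤ C) ∧ (∀ x : ℝ, x ≠ c → ContinuousAt g x) ∧
  Tendsto g (nhdsWithin c (Ioi c)) (nhds gp) ∧
  Tendsto g (nhdsWithin c (Iio c)) (nhds gm)

/-- The forcing variable `X = z.2` is continuously distributed with a continuous density `f`
and the cutoff `c` lies in the interior of the support of the density. -/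
def XCont (c : ℝ) (P : ProbabilityMeasure (ℝ × ℝ)) (f : ℝ → ℝ) : Prop :=
  Continuous f ∧ (∀ x, 0 ≤ f x) ∧
  (P : Measure (ℝ × ℝ)).map Prod.snd
    = MeasureTheory.volume.withDensity (fun x => ENNReal.ofReal (f x)) ∧
  c ∈ interior {x | 0 < f x}

/-- `E_P[Y | X] = g(X)` `P`-almost surely, expressed via the defining property of
conditional expectations, together with integrability of `Y = z.1`. -/
def CondMeanEq (P : ProbabilityMeasure (ℝ × ℝ)) (g : ℝ → ℝ) : Prop :=
  Integrable (fun z : ℝ × ℝ => z.1) (P : Measure (ℝ × ℝ)) ∧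
  ∀ B : Set ℝ, MeasurableSet B →
    ∫ z in {z : ℝ × ℝ | z.2 ∈ B}, z.1 ∂(P : Measure (ℝ × ℝ))
      = ∫ z in {z : ℝ × ℝ | z.2 ∈ B}, g z.2 ∂(P : Measure (ℝ × ℝ))

/-- The family `𝒫` of sharp RDD models: `(Y,X) ∼ P` with `X` continuously distributed,
`c` interior to its support, and conditional mean in the class `𝒢`. -/
def MemRDD (c : ℝ) (P : ProbabilityMeasure (ℝ × ℝ)) : Prop :=
  (∃ f, XCont c P f) ∧ ∃ g gp gm, JumpFun c g gp gm ∧ CondMeanEq P g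

lemma measurable_of_continuousAt_compl (c : ℝ) (g : ℝ → ℝ)
    (hg : ∀ x : ℝ, x ≠ c → ContinuousAt g x) : Measurable g := by
  apply measurable_of_isOpen
  intro U hU
  have h1 : IsOpen (g ⁻¹' U \ {c}) := by
    rw [isOpen_iff_mem_nhds]
    rintro x ⟨hxU, hxc⟩
    have hcont := hg x hxc
    have h2 : g ⁻¹' U ∈ nhds x := hcont (hU.mem_nhds hxU)
    have h3 : ({c} : Set ℝ)ᶜ ∈ nhds x :=
      (isOpen_compl_singleton).mem_nhds hxc
    exact Filter.inter_mem h2 h3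
  have h4 : MeasurableSet (g ⁻¹' U ∩ {c}) :=
    ((countable_singleton c).mono inter_subset_right).measurableSet
  have : g ⁻¹' U = (g ⁻¹' U \ {c}) ∪ (g ⁻¹' U ∩ {c}) := by
    ext x; by_cases hx : x = c <;> simp [hx]
  rw [this]
  exact h1.measurableSet.union h4

lemma indicator_bound (a c K : ℝ) (hac : a ≤ c) (x : ℝ) :
    |(Ico a c).indicator (fun y => K * (y - a)) x| ≤ |K| * (c - a) := by
  by_cases hx : x ∈ Ico a c
  · rw [indicator_of_mem hx, abs_mul]
    refine mul_le_mul_of_nonneg_left ?_ (abs_nonneg K)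
    rw [abs_of_nonneg (by linarith [hx.1] : (0:ℝ) ≤ x - a)]
    linarith [hx.2]
  · rw [indicator_of_notMem hx]
    simpa using mul_nonneg (abs_nonneg K) (by linarith)

lemma indicator_eq_on_Iio (a c K : ℝ) {y : ℝ} (hy : y ∈ Iio c) :
    (Ico a c).indicator (fun y => K * (y - a)) y = K * max (y - a) 0 := by
  by_cases hya : a ≤ y
  · have hmem : y ∈ Ico a c := ⟨hya, hy⟩
    rw [indicator_of_mem hmem, max_eq_left (by linarith)]
  · rw [indicator_of_notMem (fun h => hya h.1), max_eq_right (by linarith), mul_zero]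

lemma indicator_continuousAt (a c K : ℝ) (hac : a < c) {x : ℝ} (hx : x ≠ c) :
    ContinuousAt ((Ico a c).indicator (fun y => K * (y - a))) x := by
  rcases lt_or_gt_of_ne hx with h | h
  · have hcont : ContinuousAt (fun y : ℝ => K * max (y - a) 0) x :=
      (continuous_const.mul ((continuous_id.sub continuous_const).max continuous_const)).continuousAt
    refine hcont.congr ?_
    filter_upwards [isOpen_Iio.mem_nhds h] with y hy
    exact (indicator_eq_on_Iio a c K hy).symm
  · refine continuousAt_const.congr (f := fun _ => (0:ℝ)) ?_
    filter_upwards [isOpen_Ioi.mem_nhds h] with y hy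
    exact (indicator_of_notMem (fun hmem => absurd hmem.2 (not_lt.2 hy.le)) _).symm

lemma indicator_tendsto_right (a c K : ℝ) :
    Tendsto ((Ico a c).indicator (fun y => K * (y - a))) (nhdsWithin c (Ioi c)) (nhds 0) := by
  refine tendsto_const_nhds.congr' ?_
  filter_upwards [self_mem_nhdsWithin] with y hy
  exact (indicator_of_notMem (fun hmem => absurd hmem.2 (not_lt.2 hy.le)) _).symm

lemma indicator_tendsto_left (a c K : ℝ) (hac : a < c) :
    Tendsto ((Ico a c).indicator (fun y => K * (y - a))) (nhdsWithin c (Iio c))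
      (nhds (K * (c - a))) := by
  have hcont : Tendsto (fun y : ℝ => K * max (y - a) 0) (nhdsWithin c (Iio c))
      (nhds (K * max (c - a) 0)) :=
    ((continuous_const.mul ((continuous_id.sub continuous_const).max
      continuous_const)).tendsto c).mono_left nhdsWithin_le_nhds
  rw [max_eq_left (by linarith)] at hcont
  refine hcont.congr' ?_
  filter_upwards [self_mem_nhdsWithin] with y hy
  exact (indicator_eq_on_Iio a c K hy).symm

/-- Corollary 1, indistinguishability in RDD: for every `m`, any model
`Q ∈ 𝒫` with jump `μ(Q) ≠ m` is the weak limit of models in `𝒫` whose jump equals `m`;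
moreover the approximating sequence may be taken to match the marginal of `X`, to match the
conditional law of `(Y,X)` outside the window `[c − 1/k, c)`, and to have conditional mean
`g_k(x) = E_Q[Y|X=x] + 1{c−1/k ≤ x < c}·k·(μ(Q) − m)·(x − c + 1/k)`. -/
theorem rdd_indistinguishable (c : ℝ) (μ : ProbabilityMeasure (ℝ × ℝ) → ℝ)
    (hμ : ∀ (P : ProbabilityMeasure (ℝ × ℝ)) (g : ℝ → ℝ) (gp gm : ℝ),
      MemRDD c P → JumpFun c g gp gm → CondMeanEq P g → μ P = gp - gm)
    (m : ℝ) (Q : ProbabilityMeasure (ℝ × ℝ)) (hQ : MemRDD c Q) (hQm : μ Q ≠ m) :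
    ∃ P : ℕ → ProbabilityMeasure (ℝ × ℝ),
      (∀ k, MemRDD c (P k) ∧ μ (P k) = m) ∧
      ConvDM (fun k => ((P k) : Measure (ℝ × ℝ))) (Q : Measure (ℝ × ℝ)) ∧
      ∃ gQ gp gm, JumpFun c gQ gp gm ∧ CondMeanEq Q gQ ∧
        ∀ k : ℕ,
          ((P k : Measure (ℝ × ℝ)).map Prod.snd = (Q : Measure (ℝ × ℝ)).map Prod.snd) ∧
          (∀ B : Set (ℝ × ℝ), MeasurableSet B →
            (P k : Measure (ℝ × ℝ)) (B ∩ {z : ℝ × ℝ | z.2 ∉ Ico (c - 1/(k+1 : ℝ)) c})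
              = (Q : Measure (ℝ × ℝ)) (B ∩ {z : ℝ × ℝ | z.2 ∉ Ico (c - 1/(k+1 : ℝ)) c})) ∧
          CondMeanEq (P k) (fun x => gQ x +
            (Ico (c - 1/(k+1 : ℝ)) c).indicator
              (fun x => (k+1 : ℝ) * (μ Q - m) * (x - c + 1/(k+1 : ℝ))) x) := by
  obtain ⟨⟨f, hf⟩, gQ, gp, gm, hJ, hC⟩ := hQ
  have hQmem : MemRDD c Q := ⟨⟨f, hf⟩, gQ, gp, gm, hJ, hC⟩
  have hμQ : μ Q = gp - gm := hμ Q gQ gp gm hQmem hJ hC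
  obtain ⟨CQ, hCQ⟩ := hJ.1
  have hgQ_meas : Measurable gQ := measurable_of_continuousAt_compl c gQ hJ.2.1
  set L : ℝ := μ Q - m with hLdef
  set a : ℕ → ℝ := fun k => c - 1/(k+1 : ℝ) with ha
  set K : ℕ → ℝ := fun k => ((k : ℝ)+1) * L with hK
  set u : ℕ → ℝ → ℝ := fun k => (Ico (a k) c).indicator (fun x => K k * (x - a k)) with hu
  have hkpos : ∀ k : ℕ, (0:ℝ) < 1/((k:ℝ)+1) := fun k => by positivity
  have hac : ∀ k, a k < c := by
    intro k; have := hkpos k; simp only [ha]; linarith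
  have hKval : ∀ k, K k * (c - a k) = L := by
    intro k
    have hne : ((k:ℝ)+1) ≠ 0 := by positivity
    simp only [ha, hK]
    field_simp
    ring
  have hu_meas : ∀ k, Measurable (u k) := by
    intro k
    exact (measurable_const.mul (measurable_id.sub measurable_const)).indicator
      measurableSet_Ico
  have hu_bdd : ∀ k x, |u k x| ≤ |K k| * (c - a k) := by
    intro k x
    exact indicator_bound (a k) c (K k) (hac k).le x
  set T : ℕ → ℝ × ℝ → ℝ × ℝ := fun k z => (z.1 + u k z.2, z.2) with hT
  have hT_meas : ∀ k, Measurable (T k) := by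
    intro k
    exact (measurable_fst.add ((hu_meas k).comp measurable_snd)).prodMk measurable_snd
  set P : ℕ → ProbabilityMeasure (ℝ × ℝ) :=
    fun k => Q.map (hT_meas k).aemeasurable with hP
  have hPcoe : ∀ k, (P k : Measure (ℝ × ℝ)) = (Q : Measure (ℝ × ℝ)).map (T k) :=
    fun k => rfl
  -- identity outside the strip
  have hTid : ∀ (k : ℕ) (z : ℝ × ℝ), z.2 ∉ Ico (c - 1/(k+1 : ℝ)) c → T k z = z := by
    intro k z hz
    have h0 : u k z.2 = 0 := indicator_of_notMem (by simpa [ha] using hz) _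
    simp only [hT, h0, add_zero]
  -- equality of the stated indicator with u k
  have hIeq : ∀ k : ℕ, (Ico (c - 1/(k+1 : ℝ)) c).indicator
      (fun x => (k+1 : ℝ) * (μ Q - m) * (x - c + 1/(k+1 : ℝ))) = u k := by
    intro k
    have hfe : (fun x : ℝ => (k+1 : ℝ) * (μ Q - m) * (x - c + 1/(k+1 : ℝ)))
        = (fun x : ℝ => K k * (x - a k)) := by
      funext x
      simp only [hK, ha, hLdef]
      ring
    rw [hfe]
  -- marginal of X is preserved
  have hmarg : ∀ k, (P k : Measure (ℝ × ℝ)).map Prod.snd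
      = (Q : Measure (ℝ × ℝ)).map Prod.snd := by
    intro k
    rw [hPcoe k, Measure.map_map measurable_snd (hT_meas k)]
    rfl
  -- agreement outside the strip
  have hstrip : ∀ k, ∀ B : Set (ℝ × ℝ), MeasurableSet B →
      (P k : Measure (ℝ × ℝ)) (B ∩ {z : ℝ × ℝ | z.2 ∉ Ico (c - 1/(k+1 : ℝ)) c})
        = (Q : Measure (ℝ × ℝ)) (B ∩ {z : ℝ × ℝ | z.2 ∉ Ico (c - 1/(k+1 : ℝ)) c}) := by
    intro k B hB
    have hN : MeasurableSet {z : ℝ × ℝ | z.2 ∉ Ico (c - 1/(k+1 : ℝ)) c} :=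
      (measurable_snd measurableSet_Ico).compl
    rw [hPcoe k, Measure.map_apply (hT_meas k) (hB.inter hN)]
    congr 1
    ext z
    simp only [mem_preimage, mem_inter_iff, mem_setOf_eq]
    constructor
    · rintro ⟨h1, h2⟩
      have h2' : z.2 ∉ Ico (c - 1/(k+1 : ℝ)) c := h2
      rw [hTid k z h2'] at h1
      exact ⟨h1, h2'⟩
    · rintro ⟨h1, h2⟩
      have hz := hTid k z h2
      rw [hz]
      exact ⟨h1, h2⟩
  -- integrability of bounded measurable functions of X
  have hbdd_int : ∀ (h : ℝ → ℝ) (C : ℝ), Measurable h → (∀ x, |h x| ≤ C) →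
      ∀ (ν : Measure (ℝ × ℝ)), IsFiniteMeasure ν →
      Integrable (fun z : ℝ × ℝ => h z.2) ν := by
    intro h C hm hb ν hν
    haveI := hν
    exact Integrable.mono' (integrable_const C)
      (hm.comp measurable_snd).aestronglyMeasurable
      (ae_of_all _ fun z => by simpa [Real.norm_eq_abs] using hb z.2)
  -- conditional mean of P k
  have hCM : ∀ k, CondMeanEq (P k) (fun x => gQ x + u k x) := by
    intro k
    constructor
    · rw [hPcoe k,
        integrable_map_measure measurable_fst.aestronglyMeasurable (hT_meas k).aemeasurable]
      have heq : (fun z : ℝ × ℝ => z.1) ∘ T k = fun z : ℝ × ℝ => z.1 + u k z.2 := rfl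
      rw [heq]
      exact hC.1.add (hbdd_int (u k) _ (hu_meas k) (hu_bdd k) _ inferInstance)
    · intro B hB
      have hS : MeasurableSet {z : ℝ × ℝ | z.2 ∈ B} := measurable_snd hB
      have hgk_meas : Measurable fun z : ℝ × ℝ => gQ z.2 + u k z.2 :=
        (hgQ_meas.comp measurable_snd).add ((hu_meas k).comp measurable_snd)
      rw [hPcoe k,
        setIntegral_map hS measurable_fst.aestronglyMeasurable (hT_meas k).aemeasurable,
        setIntegral_map hS hgk_meas.aestronglyMeasurable (hT_meas k).aemeasurable]
      have hpre : T k ⁻¹' {z : ℝ × ℝ | z.2 ∈ B} = {z : ℝ × ℝ | z.2 ∈ B} := rfl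
      rw [hpre]
      have hL1 : ∫ z in {z : ℝ × ℝ | z.2 ∈ B}, (T k z).1 ∂(Q : Measure (ℝ × ℝ))
          = ∫ z in {z : ℝ × ℝ | z.2 ∈ B}, (z.1 + u k z.2) ∂(Q : Measure (ℝ × ℝ)) := rfl
      have hL2 : ∫ z in {z : ℝ × ℝ | z.2 ∈ B},
            (gQ (T k z).2 + u k (T k z).2) ∂(Q : Measure (ℝ × ℝ))
          = ∫ z in {z : ℝ × ℝ | z.2 ∈ B},
            (gQ z.2 + u k z.2) ∂(Q : Measure (ℝ × ℝ)) := rfl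
      rw [hL1, hL2]
      have hu_on : Integrable (fun z : ℝ × ℝ => u k z.2)
          ((Q : Measure (ℝ × ℝ)).restrict {z : ℝ × ℝ | z.2 ∈ B}) :=
        hbdd_int (u k) _ (hu_meas k) (hu_bdd k) _ inferInstance
      have hg_on : Integrable (fun z : ℝ × ℝ => gQ z.2)
          ((Q : Measure (ℝ × ℝ)).restrict {z : ℝ × ℝ | z.2 ∈ B}) :=
        hbdd_int gQ CQ hgQ_meas hCQ _ inferInstance
      rw [integral_add (hC.1.integrableOn) hu_on, integral_add hg_on hu_on, hC.2 B hB]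
  -- jump function of P k
  have hJk : ∀ k, JumpFun c (fun x => gQ x + u k x) gp (gm + L) := by
    intro k
    refine ⟨⟨CQ + |K k| * (c - a k), fun x => ?_⟩,
      fun x hx => (hJ.2.1 x hx).add ?_, ?_, ?_⟩
    · exact (abs_add_le _ _).trans (add_le_add (hCQ x) (hu_bdd k x))
    · exact indicator_continuousAt (a k) c (K k) (hac k) hx
    · simpa using hJ.2.2.1.add (indicator_tendsto_right (a k) c (K k))
    · have h := hJ.2.2.2.add (indicator_tendsto_left (a k) c (K k) (hac k))
      rwa [hKval k] at h
  -- membership of P k in the RDD family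
  have hMem : ∀ k, MemRDD c (P k) := by
    intro k
    refine ⟨⟨f, hf.1, hf.2.1, ?_, hf.2.2.2⟩,
      fun x => gQ x + u k x, gp, gm + L, hJk k, hCM k⟩
    rw [hmarg k]
    exact hf.2.2.1
  have hjump : ∀ k, μ (P k) = m := by
    intro k
    have := hμ (P k) (fun x => gQ x + u k x) gp (gm + L) (hMem k) (hJk k) (hCM k)
    rw [this, hLdef, hμQ]
    ring
  -- weak convergence
  have hConv : ConvDM (fun k => ((P k) : Measure (ℝ × ℝ))) (Q : Measure (ℝ × ℝ)) := by
    rintro g hg ⟨Cg, hCg⟩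
    have hglim : ∀ z : ℝ × ℝ, ∀ᶠ k in atTop, T k z = z := by
      intro z
      by_cases hz : z.2 < c
      · have h0 : Tendsto (fun k : ℕ => 1/((k:ℝ)+1)) atTop (nhds 0) := by
          exact tendsto_one_div_add_atTop_nhds_zero_nat
        filter_upwards [h0.eventually_lt_const (by linarith : (0:ℝ) < c - z.2)] with k hk
        refine hTid k z fun hmem => ?_
        have := hmem.1
        linarith
      · filter_upwards with k
        exact hTid k z fun hmem => hz hmem.2
    have hrw : ∀ k, ∫ z, g z ∂((P k) : Measure (ℝ × ℝ))
        = ∫ z, g (T k z) ∂(Q : Measure (ℝ × ℝ)) := by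
      intro k
      rw [hPcoe k, integral_map (hT_meas k).aemeasurable hg.measurable.aestronglyMeasurable]
    refine Tendsto.congr (fun k => (hrw k).symm) ?_
    refine tendsto_integral_of_dominated_convergence (fun _ => Cg)
      (fun k => (hg.measurable.comp (hT_meas k)).aestronglyMeasurable)
      (integrable_const Cg)
      (fun k => ae_of_all _ fun z => by simpa [Real.norm_eq_abs] using hCg (T k z))
      (ae_of_all _ fun z => ?_)
    refine tendsto_const_nhds.congr' ?_
    filter_upwards [hglim z] with k hk
    rw [hk]
  refine ⟨P, fun k => ⟨hMem k, hjump k⟩, hConv, gQ, gp, gm, hJ, hC,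
    fun k => ⟨hmarg k, hstrip k, ?_⟩⟩
  rw [hIeq k]
  exact hCM k
end

section
/- (Regression Discontinuity Design, testing impossibility.) For every m ∈ ℝ, any test φ_m of H₀ : μ(P) = m against H₁ : μ(P) ≠ m that is a.s. continuous under every Q ∈ 𝒫₁(m) has power limited by size: sup_{Q∈𝒫₁(m)} E_Q[φ_m] ≤ sup_{P∈𝒫₀(m)} E_P[φ_m]. -/
open MeasureTheory Filter Set

noncomputable def rddBump (c d : ℝ) (k : ℕ) (x : ℝ) : ℝ :=
  if x < c then d * max 0 (1 - (k : ℝ) * (c - x)) else 0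

lemma rddBump_measurable (c d : ℝ) (k : ℕ) : Measurable (rddBump c d k) := by
  unfold rddBump
  exact Measurable.ite (measurableSet_lt measurable_id measurable_const)
    (by fun_prop) measurable_const

lemma rddBump_abs_le (c d : ℝ) (k : ℕ) (x : ℝ) : |rddBump c d k x| ≤ |d| := by
  unfold rddBump
  split_ifs with h
  · rw [abs_mul]
    have hk0 : (0:ℝ) ≤ (k : ℝ) * (c - x) := mul_nonneg (Nat.cast_nonneg k) (by linarith)
    have h1 : max 0 (1 - (k : ℝ) * (c - x)) ≤ 1 := max_le zero_le_one (by linarith)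
    have h0 : (0:ℝ) ≤ max 0 (1 - (k : ℝ) * (c - x)) := le_max_left _ _
    calc |d| * |max 0 (1 - (k : ℝ) * (c - x))| ≤ |d| * 1 := by
          rw [abs_of_nonneg h0]; exact mul_le_mul_of_nonneg_left h1 (abs_nonneg d)
      _ = |d| := mul_one _
  · simp [abs_nonneg]

lemma rddBump_continuousAt (c d : ℝ) (k : ℕ) {x : ℝ} (hx : x ≠ c) :
    ContinuousAt (rddBump c d k) x := by
  rcases lt_or_gt_of_ne hx with h | h
  · have hc : ContinuousAt (fun y => d * max 0 (1 - (k : ℝ) * (c - y))) x := by fun_prop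
    apply hc.congr
    filter_upwards [Iio_mem_nhds h] with y hy
    exact (if_pos hy).symm
  · have hc : ContinuousAt (fun _ : ℝ => (0:ℝ)) x := continuousAt_const
    apply hc.congr
    filter_upwards [Ioi_mem_nhds h] with y hy
    simp [rddBump, not_lt.mpr (le_of_lt (mem_Ioi.mp hy))]

lemma rddBump_tendsto_right (c d : ℝ) (k : ℕ) :
    Tendsto (rddBump c d k) (nhdsWithin c (Ioi c)) (nhds 0) := by
  apply Tendsto.congr' _ tendsto_const_nhds
  filter_upwards [self_mem_nhdsWithin] with y (hy : y ∈ Ioi c)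
  simp [rddBump, not_lt.mpr (le_of_lt (mem_Ioi.mp hy))]

lemma rddBump_tendsto_left (c d : ℝ) (k : ℕ) :
    Tendsto (rddBump c d k) (nhdsWithin c (Iio c)) (nhds d) := by
  have hc : Tendsto (fun y => d * max 0 (1 - (k : ℝ) * (c - y))) (nhdsWithin c (Iio c))
      (nhds (d * max 0 (1 - (k : ℝ) * (c - c)))) := by
    apply Tendsto.mono_left _ nhdsWithin_le_nhds
    exact (Continuous.tendsto (by fun_prop) c)
  simp only [sub_self, mul_zero, sub_zero, max_eq_right zero_le_one, mul_one] at hc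
  apply Tendsto.congr' _ hc
  filter_upwards [self_mem_nhdsWithin] with y (hy : y ∈ Iio c)
  exact (if_pos hy).symm

lemma rddBump_tendsto_zero (c d : ℝ) (x : ℝ) :
    Tendsto (fun k => rddBump c d k x) atTop (nhds 0) := by
  apply Tendsto.congr' _ tendsto_const_nhds
  rcases lt_or_ge x c with h | h
  · have hpos : 0 < c - x := by linarith
    obtain ⟨K, hK⟩ := exists_nat_gt (1 / (c - x))
    filter_upwards [eventually_ge_atTop K] with k hk
    have : (1:ℝ) - (k : ℝ) * (c - x) ≤ 0 := by
      have h2 : (1 : ℝ) / (c - x) ≤ (k : ℝ) := le_trans (le_of_lt hK) (by exact_mod_cast hk)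
      have := (div_le_iff₀ hpos).mp h2
      linarith
    simp [rddBump, h, max_eq_left this]
  · filter_upwards with k
    simp [rddBump, not_lt.mpr h]

lemma jumpfun_measurable {c : ℝ} {g : ℝ → ℝ} {gp gm : ℝ} (h : JumpFun c g gp gm) :
    Measurable g := by
  apply measurable_of_measurable_on_compl_singleton c
  have : ContinuousOn g {x | x ≠ c} := fun x hx => (h.2.1 x hx).continuousWithinAt
  exact this.restrict.measurable

lemma pi_map_const {E : Type*} [MeasurableSpace E] (n : ℕ) (μ : Measure E)
    [IsProbabilityMeasure μ] (T : E → E) (hT : Measurable T) :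
    (Measure.pi fun _ : Fin n => μ.map T)
      = (Measure.pi fun _ : Fin n => μ).map (fun z i => T (z i)) := by
  haveI : IsProbabilityMeasure (μ.map T) := Measure.isProbabilityMeasure_map hT.aemeasurable
  have hF : Measurable (fun (z : Fin n → E) i => T (z i)) :=
    measurable_pi_lambda _ fun i => hT.comp (measurable_pi_apply i)
  refine Measure.pi_eq (μ := fun _ : Fin n => μ.map T) fun s hs => ?_
  rw [Measure.map_apply hF (MeasurableSet.univ_pi hs)]
  have hpre : (fun (z : Fin n → E) i => T (z i)) ⁻¹' (univ.pi s)
      = univ.pi fun i => T ⁻¹' s i := by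
    ext z; simp [Set.mem_pi]
  rw [hpre, Measure.pi_pi]
  exact Finset.prod_congr rfl fun i _ => (Measure.map_apply hT (hs i)).symm

instance sampleDist_isProb {E : Type*} [MeasurableSpace E] (n : ℕ)
    (P : ProbabilityMeasure E) : IsProbabilityMeasure (sampleDist n P) := by
  unfold sampleDist; infer_instance

lemma test_integrable {E : Type*} [MeasurableSpace E] {φ : E → ℝ} (hφ : IsTest φ)
    (μ : Measure E) [IsProbabilityMeasure μ] : Integrable φ μ := by
  refine (integrable_const (1:ℝ)).mono' hφ.1.aestronglyMeasurable (ae_of_all _ fun z => ?_)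
  rw [Real.norm_eq_abs]
  exact abs_le.mpr ⟨by linarith [(hφ.2 z).1], (hφ.2 z).2⟩

/-- Corollary 1(i), RDD testing impossibility: for every `m`, any test of
`H₀ : μ(P) = m` against `H₁ : μ(P) ≠ m` that is a.s. continuous under every alternative has
power limited by size. -/
theorem rdd_power_limited_by_size (n : ℕ) (hn : 1 ≤ n) (c : ℝ)
    (μ : ProbabilityMeasure (ℝ × ℝ) → ℝ)
    (hμ : ∀ (P : ProbabilityMeasure (ℝ × ℝ)) (g : ℝ → ℝ) (gp gm : ℝ),
      MemRDD c P → JumpFun c g gp gm → CondMeanEq P g → μ P = gp - gm)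
    (m : ℝ) (φ : (Fin n → ℝ × ℝ) → ℝ) (hφ : IsTest φ)
    (hcont : ∀ Q : ProbabilityMeasure (ℝ × ℝ), MemRDD c Q → μ Q ≠ m → ASCont n Q φ) :
    sSup ((fun Q => tpower n Q φ) '' {Q | MemRDD c Q ∧ μ Q ≠ m}) ≤
      sSup ((fun P => tpower n P φ) '' {P | MemRDD c P ∧ μ P = m}) := by
  set S0 := ((fun P => tpower n P φ) '' {P | MemRDD c P ∧ μ P = m}) with hS0
  have tp_le_one : ∀ P : ProbabilityMeasure (ℝ × ℝ), tpower n P φ ≤ 1 := by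
    intro P
    have h := integral_mono (test_integrable hφ (sampleDist n P)) (integrable_const (1:ℝ))
      (fun z => (hφ.2 z).2)
    simpa [tpower] using h
  have tp_nonneg : ∀ P : ProbabilityMeasure (ℝ × ℝ), 0 ≤ tpower n P φ :=
    fun P => integral_nonneg fun z => (hφ.2 z).1
  have hbdd : BddAbove S0 := ⟨1, by rintro x ⟨P, _, rfl⟩; exact tp_le_one P⟩
  have h0 : 0 ≤ sSup S0 := by
    rcases S0.eq_empty_or_nonempty with h | ⟨x, hx⟩
    · rw [h, Real.sSup_empty]
    · obtain ⟨P, hPmem, rfl⟩ := hx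
      exact le_trans (tp_nonneg P) (le_csSup hbdd ⟨P, hPmem, rfl⟩)
  refine Real.sSup_le ?_ h0
  rintro x ⟨Q, ⟨hQmem, hQne⟩, rfl⟩
  obtain ⟨⟨f, hf⟩, g, gp, gm, hjump, hcond⟩ := hQmem
  obtain ⟨C, hC⟩ := hjump.1
  obtain ⟨hYint, hB⟩ := hcond
  set d := gp - gm - m with hd
  set T : ℕ → ℝ × ℝ → ℝ × ℝ := fun k z => (z.1 + rddBump c d k z.2, z.2) with hT
  have hTmeas : ∀ k, Measurable (T k) := fun k =>
    (measurable_fst.add ((rddBump_measurable c d k).comp measurable_snd)).prodMk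
      measurable_snd
  set Pk : ℕ → ProbabilityMeasure (ℝ × ℝ) :=
    fun k => Q.map (f := T k) (hTmeas k).aemeasurable with hPkdef
  have hPkcoe : ∀ k, (Pk k : Measure (ℝ × ℝ)) = (Q : Measure (ℝ × ℝ)).map (T k) :=
    fun k => Q.toMeasure_map _
  -- membership of Pk k in the null class
  have hsnd : ∀ k, ((Pk k : Measure (ℝ × ℝ))).map Prod.snd
      = ((Q : Measure (ℝ × ℝ))).map Prod.snd := by
    intro k
    rw [hPkcoe, Measure.map_map measurable_snd (hTmeas k)]
    rfl
  have hXcont : ∀ k, XCont c (Pk k) f := by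
    intro k
    exact ⟨hf.1, hf.2.1, by rw [hsnd k]; exact hf.2.2.1, hf.2.2.2⟩
  have hgmeas : Measurable g := jumpfun_measurable hjump
  have hbump_int : ∀ k, Integrable (fun z : ℝ × ℝ => rddBump c d k z.2)
      (Q : Measure (ℝ × ℝ)) := by
    intro k
    refine (integrable_const |d|).mono'
      ((rddBump_measurable c d k).comp measurable_snd).aestronglyMeasurable
      (ae_of_all _ fun z => ?_)
    rw [Real.norm_eq_abs]; exact rddBump_abs_le c d k z.2
  have hgint : Integrable (fun z : ℝ × ℝ => g z.2) (Q : Measure (ℝ × ℝ)) := by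
    refine (integrable_const C).mono'
      (hgmeas.comp measurable_snd).aestronglyMeasurable (ae_of_all _ fun z => ?_)
    rw [Real.norm_eq_abs]; exact hC z.2
  have hjumpk : ∀ k, JumpFun c (fun x => g x + rddBump c d k x) gp (gm + d) := by
    intro k
    refine ⟨⟨C + |d|, fun x => (abs_add_le _ _).trans
        (add_le_add (hC x) (rddBump_abs_le c d k x))⟩,
      fun x hx => (hjump.2.1 x hx).add (rddBump_continuousAt c d k hx), ?_, ?_⟩
    · simpa using hjump.2.2.1.add (rddBump_tendsto_right c d k)
    · exact hjump.2.2.2.add (rddBump_tendsto_left c d k)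
  have hcondk : ∀ k, CondMeanEq (Pk k) (fun x => g x + rddBump c d k x) := by
    intro k
    constructor
    · rw [hPkcoe k,
        integrable_map_measure measurable_fst.aestronglyMeasurable (hTmeas k).aemeasurable]
      exact hYint.add (hbump_int k)
    · intro B hBmeas
      have hSmeas : MeasurableSet {z : ℝ × ℝ | z.2 ∈ B} := measurable_snd hBmeas
      rw [hPkcoe k,
        setIntegral_map hSmeas measurable_fst.aestronglyMeasurable (hTmeas k).aemeasurable,
        setIntegral_map (f := fun z : ℝ × ℝ => (fun x => g x + rddBump c d k x) z.2) hSmeas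
          ((hgmeas.add (rddBump_measurable c d k)).comp measurable_snd).aestronglyMeasurable
          (hTmeas k).aemeasurable]
      have hpre : T k ⁻¹' {z : ℝ × ℝ | z.2 ∈ B} = {z : ℝ × ℝ | z.2 ∈ B} := rfl
      rw [hpre]
      show (∫ z in {z : ℝ × ℝ | z.2 ∈ B}, (z.1 + rddBump c d k z.2) ∂(Q : Measure (ℝ × ℝ)))
        = ∫ z in {z : ℝ × ℝ | z.2 ∈ B}, (g z.2 + rddBump c d k z.2) ∂(Q : Measure (ℝ × ℝ))
      rw [integral_add hYint.integrableOn (hbump_int k).integrableOn,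
        integral_add hgint.integrableOn (hbump_int k).integrableOn, hB B hBmeas]
  have hmemk : ∀ k, MemRDD c (Pk k) :=
    fun k => ⟨⟨f, hXcont k⟩, _, gp, gm + d, hjumpk k, hcondk k⟩
  have hμk : ∀ k, μ (Pk k) = m := by
    intro k
    rw [hμ (Pk k) _ gp (gm + d) (hmemk k) (hjumpk k) (hcondk k), hd]
    ring
  -- convergence of the powers
  set F : ℕ → (Fin n → ℝ × ℝ) → (Fin n → ℝ × ℝ) := fun k z i => T k (z i) with hF
  have hFmeas : ∀ k, Measurable (F k) :=
    fun k => measurable_pi_lambda _ fun i => (hTmeas k).comp (measurable_pi_apply i)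
  have hsample : ∀ k, sampleDist n (Pk k) = (sampleDist n Q).map (F k) := by
    intro k
    unfold sampleDist
    simp only [hPkcoe]
    exact pi_map_const n (Q : Measure (ℝ × ℝ)) (T k) (hTmeas k)
  have hrw : ∀ k, tpower n (Pk k) φ = ∫ z, φ (F k z) ∂ sampleDist n Q := by
    intro k
    unfold tpower
    rw [hsample k, integral_map (hFmeas k).aemeasurable hφ.1.aestronglyMeasurable]
  have hae : ∀ᵐ z ∂ sampleDist n Q, ContinuousAt φ z :=
    ae_iff.mpr (hcont Q ⟨⟨f, hf⟩, g, gp, gm, hjump, ⟨hYint, hB⟩⟩ hQne)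
  have htend : Tendsto (fun k => tpower n (Pk k) φ) atTop (nhds (tpower n Q φ)) := by
    simp only [hrw]
    unfold tpower
    refine tendsto_integral_of_dominated_convergence (fun _ => (1:ℝ))
      (fun k => (hφ.1.comp (hFmeas k)).aestronglyMeasurable) (integrable_const 1)
      (fun k => ae_of_all _ fun z => ?_) ?_
    · show ‖φ (F k z)‖ ≤ 1
      rw [Real.norm_eq_abs]
      exact abs_le.mpr ⟨by linarith [(hφ.2 (F k z)).1], (hφ.2 (F k z)).2⟩
    · filter_upwards [hae] with z hz
      refine Filter.Tendsto.comp hz ?_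
      rw [tendsto_pi_nhds]
      intro i
      have h1 : Tendsto (fun k => (z i).1 + rddBump c d k (z i).2) atTop
          (nhds ((z i).1)) := by
        simpa using tendsto_const_nhds.add (rddBump_tendsto_zero c d (z i).2)
      have h2 := h1.prodMk_nhds (tendsto_const_nhds (α := ℕ) (x := (z i).2))
      simpa using h2
  refine le_of_tendsto htend (Eventually.of_forall fun k => ?_)
  exact le_csSup hbdd ⟨Pk k, ⟨hmemk k, hμk k⟩, rfl⟩
end
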